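/- arXiv:2005.13608 — 2 statements merged into one kernel-verified Lean document; each statement's English description precedes it below -/
import Mathlib

section
/- If G and H are graphs without isolated vertices, at most one of them has a universal vertex, γ_t(G) = γ_t(H) = 2, and G and H are not both triangle centered, then γ_tR(G × H) = 8. -/
open Finset

/-- A total Roman dominating function: labels in {0,1,2}, every 0-labeled vertex has a
2-labeled neighbor, and positive-labeled vertices induce a subgraph with no isolated vertex. -/
def IsTRDF {V : Type*} (G : SimpleGraph V) (f : V → ℕ) : Prop :=
  (∀ v, f v ≤ 2) ∧
  (∀ v, f v = 0 → ∃ u, G.Adj v u ∧ f u = 2) ∧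
  (∀ v, 0 < f v → ∃ u, G.Adj v u ∧ 0 < f u)

/-- The total Roman domination number. -/
noncomputable def trdn {V : Type*} (G : SimpleGraph V) [Fintype V] : ℕ :=
  sInf {w | ∃ f : V → ℕ, IsTRDF G f ∧ ∑ v, f v = w}

/-- A total dominating set. -/
def IsTotalDomSet {V : Type*} (G : SimpleGraph V) (D : Set V) : Prop :=
  ∀ v, ∃ u ∈ D, G.Adj v u

/-- The total domination number. -/
noncomputable def tdn {V : Type*} (G : SimpleGraph V) [Fintype V] : ℕ :=
  sInf {n | ∃ D : Finset V, IsTotalDomSet G ↑D ∧ D.card = n}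

/-- A packing: pairwise disjoint closed neighborhoods. -/
def IsPacking {V : Type*} (G : SimpleGraph V) (S : Set V) : Prop :=
  ∀ u ∈ S, ∀ v ∈ S, u ≠ v →
    Disjoint (insert u (G.neighborSet u)) (insert v (G.neighborSet v))

/-- The packing number. -/
noncomputable def packingNumber {V : Type*} (G : SimpleGraph V) [Fintype V] : ℕ :=
  sSup {n | ∃ S : Finset V, IsPacking G ↑S ∧ S.card = n}

/-- An open packing: pairwise disjoint open neighborhoods. -/
def IsOpenPacking {V : Type*} (G : SimpleGraph V) (S : Set V) : Prop :=
  ∀ u ∈ S, ∀ v ∈ S, u ≠ v → Disjoint (G.neighborSet u) (G.neighborSet v)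

/-- The open packing number. -/
noncomputable def openPackingNumber {V : Type*} (G : SimpleGraph V) [Fintype V] : ℕ :=
  sSup {n | ∃ S : Finset V, IsOpenPacking G ↑S ∧ S.card = n}

/-- The direct (tensor) product of two simple graphs. -/
def dirProd {V W : Type*} (G : SimpleGraph V) (H : SimpleGraph W) : SimpleGraph (V × W) where
  Adj p q := G.Adj p.1 q.1 ∧ H.Adj p.2 q.2
  symm := ⟨fun p q h => ⟨h.1.symm, h.2.symm⟩⟩
  loopless := ⟨fun p h => G.loopless.irrefl p.1 h.1⟩

/-- A graph with no isolated vertices. -/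
def NoIsolated {V : Type*} (G : SimpleGraph V) : Prop := ∀ v, ∃ u, G.Adj v u

/-- A graph is triangle centered if it has a triangle such that every vertex is
adjacent to at least two of its vertices. -/
def TriangleCentered {V : Type*} (G : SimpleGraph V) : Prop :=
  ∃ x y z : V, G.Adj x y ∧ G.Adj y z ∧ G.Adj x z ∧
    ∀ v : V, (G.Adj v x ∧ G.Adj v y) ∨ (G.Adj v y ∧ G.Adj v z) ∨ (G.Adj v x ∧ G.Adj v z)

/-- A universal vertex is adjacent to all other vertices. -/
def IsUniversalVertex {V : Type*} (G : SimpleGraph V) (v : V) : Prop :=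
  ∀ u, u ≠ v → G.Adj v u

@[simp] lemma dirProd_adj {V W : Type*} {G : SimpleGraph V} {H : SimpleGraph W} {p q : V × W} :
    (dirProd G H).Adj p q ↔ G.Adj p.1 q.1 ∧ H.Adj p.2 q.2 := Iff.rfl

lemma aux_swap_sum {V W : Type*} [Fintype V] [Fintype W] (f : V × W → ℕ) :
    ∑ p : W × V, f (p.2, p.1) = ∑ p : V × W, f p := by
  rw [Fintype.sum_prod_type, Fintype.sum_prod_type]
  exact Finset.sum_comm

lemma aux_univ_of_card_le_three {V : Type*} [Fintype V] (G : SimpleGraph V)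
    (h3 : Fintype.card V ≤ 3) (hne : Nonempty V) (hG : NoIsolated G) :
    ∃ v, IsUniversalVertex G v := by
  classical
  obtain ⟨a⟩ := hne
  obtain ⟨b, hab⟩ := hG a
  have hba : a ≠ b := G.ne_of_adj hab
  by_cases hc : ∃ c, c ≠ a ∧ c ≠ b
  · obtain ⟨c, hca, hcb⟩ := hc
    have huniv : ∀ v : V, v = a ∨ v = b ∨ v = c := by
      by_contra h
      push_neg at h
      obtain ⟨d, hda, hdb, hdc⟩ := h
      have hcard : ({a, b, c, d} : Finset V).card = 4 := by
        rw [Finset.card_insert_of_notMem (by simp [hba, Ne.symm hca, Ne.symm hda]),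
          Finset.card_insert_of_notMem (by simp [Ne.symm hcb, Ne.symm hdb]),
          Finset.card_insert_of_notMem (by simp [Ne.symm hdc]), Finset.card_singleton]
      have := Finset.card_le_card (Finset.subset_univ ({a, b, c, d} : Finset V))
      rw [hcard, Finset.card_univ] at this
      omega
    obtain ⟨e, hce⟩ := hG c
    have hce' : e = a ∨ e = b := by
      rcases huniv e with h | h | h
      · exact Or.inl h
      · exact Or.inr h
      · exact absurd (h ▸ hce) (G.loopless.irrefl c)
    rcases hce' with rfl | rfl
    · refine ⟨e, fun u hu => ?_⟩
      rcases huniv u with rfl | rfl | rfl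
      · exact absurd rfl hu
      · exact hab
      · exact hce.symm
    · refine ⟨e, fun u hu => ?_⟩
      rcases huniv u with rfl | rfl | rfl
      · exact hab.symm
      · exact absurd rfl hu
      · exact hce.symm
  · push_neg at hc
    refine ⟨a, fun u hu => ?_⟩
    rw [hc u hu]
    exact hab

lemma aux_tdn_pair {V : Type*} [Fintype V] (G : SimpleGraph V) (h : tdn G = 2) :
    ∃ a b : V, a ≠ b ∧ G.Adj a b ∧ ∀ v, G.Adj v a ∨ G.Adj v b := by
  classical
  have hne : {n | ∃ D : Finset V, IsTotalDomSet G ↑D ∧ D.card = n}.Nonempty := by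
    by_contra hemp
    rw [Set.not_nonempty_iff_eq_empty] at hemp
    rw [tdn, hemp, Nat.sInf_empty] at h
    omega
  have h2 : 2 ∈ {n | ∃ D : Finset V, IsTotalDomSet G ↑D ∧ D.card = n} := by
    rw [← h]; exact Nat.sInf_mem hne
  obtain ⟨D, hD, hcard⟩ := h2
  obtain ⟨a, b, hab, rfl⟩ := Finset.card_eq_two.mp hcard
  have hdom : ∀ v, G.Adj v a ∨ G.Adj v b := by
    intro v
    obtain ⟨u, hu, hadj⟩ := hD v
    simp only [Finset.coe_insert, Set.mem_insert_iff, Finset.coe_singleton,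
      Set.mem_singleton_iff] at hu
    rcases hu with rfl | rfl
    · exact Or.inl hadj
    · exact Or.inr hadj
  have hadj : G.Adj a b := by
    rcases hdom a with h' | h'
    · exact absurd h' (G.loopless.irrefl a)
    · exact h'
  exact ⟨a, b, hab, hadj, hdom⟩

lemma aux_sum_bound {α : Type*} [Fintype α] [DecidableEq α] (f : α → ℕ)
    (S T : Finset α) (hTS : T ⊆ S) (hS : ∀ a ∈ S, 0 < f a) (hT : ∀ a ∈ T, f a = 2) :
    S.card + T.card ≤ ∑ a, f a := by
  have h1 : ∑ a ∈ S, f a ≤ ∑ a, f a :=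
    Finset.sum_le_sum_of_subset (Finset.subset_univ S)
  have h2 : ∑ a ∈ T, f a = 2 * T.card := by
    rw [Finset.sum_congr rfl hT]; simp [mul_comm]
  have h3 : (S \ T).card ≤ ∑ a ∈ S \ T, f a := by
    have := Finset.card_nsmul_le_sum (S \ T) f 1
      (fun a ha => hS a (Finset.sdiff_subset ha))
    simpa using this
  have h4 : ∑ a ∈ S \ T, f a + ∑ a ∈ T, f a = ∑ a ∈ S, f a := Finset.sum_sdiff hTS
  have h5 : (S \ T).card = S.card - T.card := Finset.card_sdiff_of_subset hTS
  have h6 : T.card ≤ S.card := Finset.card_le_card hTS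
  omega

lemma aux_extra_unique {α : Type*} [Fintype α] [DecidableEq α] (f : α → ℕ)
    (B C : Finset α) (hBC : Disjoint B C) (hB : ∀ a ∈ B, f a = 2) (hC : ∀ a ∈ C, 0 < f a)
    (hw : ∑ a, f a ≤ 7) (hbig : 8 ≤ 2 * B.card + C.card + 2) :
    ∀ z z', z ∉ B → z ∉ C → 0 < f z → z' ∉ B → z' ∉ C → 0 < f z' → z = z' := by
  intro z z' hzB hzC hz hz'B hz'C hz'
  by_contra hne
  have hd1 : Disjoint (B ∪ C) ({z, z'} : Finset α) := by
    rw [Finset.disjoint_right]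
    intro x hx
    simp only [Finset.mem_insert, Finset.mem_singleton] at hx
    rcases hx with rfl | rfl <;> simp [hzB, hzC, hz'B, hz'C]
  have hcard : (B ∪ C ∪ {z, z'}).card = B.card + C.card + 2 := by
    rw [Finset.card_union_of_disjoint hd1, Finset.card_union_of_disjoint hBC,
      Finset.card_insert_of_notMem (by simpa using hne), Finset.card_singleton]
  have hsub : B ⊆ B ∪ C ∪ {z, z'} := by
    intro x hx; simp [hx]
  have hposS : ∀ a ∈ B ∪ C ∪ {z, z'}, 0 < f a := by
    intro a ha
    simp only [Finset.mem_union, Finset.mem_insert, Finset.mem_singleton] at ha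
    rcases ha with (ha | ha) | (rfl | rfl)
    · rw [hB a ha]; omega
    · exact hC a ha
    · exact hz
    · exact hz'
  have := aux_sum_bound f (B ∪ C ∪ {z, z'}) B hsub hposS hB
  rw [hcard] at this
  omega

lemma aux1U {V W : Type*} [Fintype V] [Fintype W] (G : SimpleGraph V) (H : SimpleGraph W)
    (f : V × W → ℕ) (hH : NoIsolated H) (hVnt : Nontrivial V) (hWne : Nonempty W)
    (hnouniv : ¬ ∃ w, IsUniversalVertex H w)
    (g₁ : V) (h₁ : W) (hP : f (g₁, h₁) = 2)
    (h2mem : ∀ u, f u = 2 → u = (g₁, h₁))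
    (hpos : ∀ v : V × W, 0 < f v → ∃ u, (dirProd G H).Adj v u ∧ 0 < f u)
    (hzero : ∀ v, f v = 0 → ∃ u, (dirProd G H).Adj v u ∧ f u = 2)
    (hw : ∑ v, f v ≤ 7) : False := by
  classical
  have hh₁ : ¬ IsUniversalVertex H h₁ := fun h => hnouniv ⟨h₁, h⟩
  rw [IsUniversalVertex] at hh₁
  push_neg at hh₁
  obtain ⟨h', hne', hnadj'⟩ := hh₁
  have hW4 : 4 ≤ Fintype.card W := by
    by_contra hlt
    push_neg at hlt
    exact hnouniv (aux_univ_of_card_le_three H (by omega) hWne hH)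
  have hV2 : 2 ≤ Fintype.card V := Fintype.one_lt_card_iff_nontrivial.mpr hVnt
  have hz : ∀ p : V × W, f p = 0 → G.Adj p.1 g₁ ∧ H.Adj p.2 h₁ := by
    intro p hp
    obtain ⟨u, hadj, hu2⟩ := hzero p hp
    rw [h2mem u hu2] at hadj
    exact hadj
  have hfib : ∀ h : W, 0 < f (g₁, h) := by
    intro h
    rcases Nat.eq_zero_or_pos (f (g₁, h)) with h0 | h0
    · exact absurd (hz _ h0).1 (G.loopless.irrefl g₁)
    · exact h0
  have hcol : ∀ (g : V) (h : W), (h = h₁ ∨ h = h') → 0 < f (g, h) := by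
    intro g h hh
    rcases Nat.eq_zero_or_pos (f (g, h)) with h0 | h0
    · rcases hh with rfl | rfl
      · exact absurd (hz _ h0).2 (H.loopless.irrefl h)
      · exact absurd ((hz _ h0).2).symm hnadj'
    · exact h0
  obtain ⟨x₁, hadj₁, hx₁⟩ := hpos (g₁, h₁) (by omega)
  have hu₁ : G.Adj g₁ x₁.1 := hadj₁.1
  have hv₁ : H.Adj h₁ x₁.2 := hadj₁.2
  have hu₁ne : x₁.1 ≠ g₁ := fun h => G.loopless.irrefl g₁ (h ▸ hu₁)
  have hv₁ne : x₁.2 ≠ h₁ := fun h => H.loopless.irrefl h₁ (h ▸ hv₁)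
  have hv₁ne' : x₁.2 ≠ h' := fun h => hnadj' (h ▸ hv₁)
  set A : Finset (V × W) := ({g₁} : Finset V) ×ˢ univ with hA
  set B : Finset (V × W) := (univ \ {g₁}) ×ˢ ({h₁, h'} : Finset W) with hB
  have hdAB : Disjoint A B := by
    rw [Finset.disjoint_left]
    rintro ⟨x, y⟩ hx hy
    rw [hA, Finset.mem_product, Finset.mem_singleton] at hx
    rw [hB, Finset.mem_product, Finset.mem_sdiff, Finset.mem_singleton] at hy
    exact hy.1.2 hx.1
  have hx₁AB : x₁ ∉ A ∪ B := by
    rw [Finset.mem_union]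
    rintro (h | h)
    · rw [hA, Finset.mem_product, Finset.mem_singleton] at h
      exact hu₁ne h.1
    · rw [hB, Finset.mem_product, Finset.mem_insert, Finset.mem_singleton] at h
      rcases h.2 with h2 | h2
      · exact hv₁ne h2
      · exact hv₁ne' h2
  have hcardA : A.card = Fintype.card W := by
    rw [hA, Finset.card_product, Finset.card_singleton, Finset.card_univ, one_mul]
  have hcardB : B.card = (Fintype.card V - 1) * 2 := by
    rw [hB, Finset.card_product, Finset.card_sdiff_of_subset (Finset.subset_univ _),
      Finset.card_univ, Finset.card_singleton,
      Finset.card_insert_of_notMem (by simpa using Ne.symm hne'), Finset.card_singleton]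
  have hcardS : (A ∪ B ∪ {x₁}).card = Fintype.card W + (Fintype.card V - 1) * 2 + 1 := by
    rw [Finset.card_union_of_disjoint (by simpa using hx₁AB),
      Finset.card_union_of_disjoint hdAB, hcardA, hcardB, Finset.card_singleton]
  have hposS : ∀ p ∈ A ∪ B ∪ {x₁}, 0 < f p := by
    rintro ⟨x, y⟩ hp
    simp only [Finset.mem_union, Finset.mem_singleton, hA, hB, Finset.mem_product,
      Finset.mem_singleton, Finset.mem_univ, and_true, true_and, Finset.mem_sdiff,
      Finset.mem_insert] at hp
    rcases hp with (rfl | ⟨_, hy⟩) | heq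
    · exact hfib y
    · exact hcol x y hy
    · rw [heq]; exact hx₁
  have hTsub : ({(g₁, h₁)} : Finset (V × W)) ⊆ A ∪ B ∪ {x₁} := by
    intro p hp
    simp only [Finset.mem_singleton] at hp
    subst hp
    simp [hA]
  have hbound := aux_sum_bound f (A ∪ B ∪ {x₁}) {(g₁, h₁)} hTsub hposS
    (by intro a ha; simp only [Finset.mem_singleton] at ha; rw [ha]; exact hP)
  rw [hcardS, Finset.card_singleton] at hbound
  omega
lemma aux1N {V W : Type*} [Fintype V] [Fintype W] (G : SimpleGraph V) (H : SimpleGraph W)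
    (f : V × W → ℕ) (hG : NoIsolated G) (hH : NoIsolated H)
    (g₁ : V) (h₁ : W) (hP : f (g₁, h₁) = 2)
    (g' : V) (hg'ne : g' ≠ g₁) (hg'na : ¬ G.Adj g₁ g')
    (h' : W) (hh'ne : h' ≠ h₁) (hh'na : ¬ H.Adj h₁ h')
    (h2mem : ∀ u, f u = 2 → u = (g₁, h₁))
    (hzero : ∀ v, f v = 0 → ∃ u, (dirProd G H).Adj v u ∧ f u = 2)
    (hw : ∑ v, f v ≤ 7) : False := by
  classical
  obtain ⟨gs, hgs⟩ := hG g₁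
  obtain ⟨hs, hhs⟩ := hH h₁
  have hz : ∀ p : V × W, f p = 0 → G.Adj p.1 g₁ ∧ H.Adj p.2 h₁ := by
    intro p hp
    obtain ⟨u, hadj, hu2⟩ := hzero p hp
    rw [h2mem u hu2] at hadj
    exact hadj
  have hrow : ∀ (g : V) (h : W), (g = g₁ ∨ g = g') → 0 < f (g, h) := by
    intro g h hg
    rcases Nat.eq_zero_or_pos (f (g, h)) with h0 | h0
    · rcases hg with rfl | rfl
      · exact absurd (hz _ h0).1 (G.loopless.irrefl g)
      · exact absurd ((hz _ h0).1).symm hg'na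
    · exact h0
  have hcol : ∀ (g : V) (h : W), (h = h₁ ∨ h = h') → 0 < f (g, h) := by
    intro g h hh
    rcases Nat.eq_zero_or_pos (f (g, h)) with h0 | h0
    · rcases hh with rfl | rfl
      · exact absurd (hz _ h0).2 (H.loopless.irrefl h)
      · exact absurd ((hz _ h0).2).symm hh'na
    · exact h0
  have hgsne : gs ≠ g₁ := fun h => G.loopless.irrefl g₁ (h ▸ hgs)
  have hgsne' : gs ≠ g' := fun h => hg'na (h ▸ hgs)
  have hhsne : hs ≠ h₁ := fun h => H.loopless.irrefl h₁ (h ▸ hhs)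
  have hhsne' : hs ≠ h' := fun h => hh'na (h ▸ hhs)
  set A : Finset (V × W) := ({g₁, g'} : Finset V) ×ˢ ({h₁, h', hs} : Finset W) with hA
  set B : Finset (V × W) := ({gs} : Finset V) ×ˢ ({h₁, h'} : Finset W) with hB
  have hdAB : Disjoint A B := by
    rw [Finset.disjoint_left]
    rintro ⟨x, y⟩ hx hy
    rw [hA, Finset.mem_product, Finset.mem_insert, Finset.mem_singleton] at hx
    rw [hB, Finset.mem_product, Finset.mem_singleton] at hy
    rcases hx.1 with rfl | rfl
    · exact hgsne hy.1.symm
    · exact hgsne' hy.1.symm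
  have hcardA : A.card = 6 := by
    rw [hA, Finset.card_product,
      Finset.card_insert_of_notMem (by simpa using Ne.symm hg'ne), Finset.card_singleton,
      Finset.card_insert_of_notMem (by simp [Ne.symm hh'ne, Ne.symm hhsne]),
      Finset.card_insert_of_notMem (by simpa using Ne.symm hhsne'), Finset.card_singleton]
  have hcardB : B.card = 2 := by
    rw [hB, Finset.card_product, Finset.card_singleton,
      Finset.card_insert_of_notMem (by simpa using Ne.symm hh'ne), Finset.card_singleton,
      one_mul]
  have hcardS : (A ∪ B).card = 8 := by
    rw [Finset.card_union_of_disjoint hdAB, hcardA, hcardB]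
  have hposS : ∀ p ∈ A ∪ B, 0 < f p := by
    rintro ⟨x, y⟩ hp
    rw [Finset.mem_union] at hp
    rcases hp with hp | hp
    · rw [hA, Finset.mem_product, Finset.mem_insert, Finset.mem_singleton] at hp
      exact hrow x y hp.1
    · simp only [hB, Finset.mem_product, Finset.mem_insert, Finset.mem_singleton] at hp
      exact hcol x y hp.2
  have hTsub : ({(g₁, h₁)} : Finset (V × W)) ⊆ A ∪ B := by
    intro p hp
    rw [Finset.mem_singleton] at hp
    subst hp
    rw [Finset.mem_union]
    left
    rw [hA, Finset.mem_product]
    simp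
  have hbound := aux_sum_bound f (A ∪ B) {(g₁, h₁)} hTsub hposS
    (by intro a ha; rw [Finset.mem_singleton] at ha; rw [ha]; exact hP)
  rw [hcardS, Finset.card_singleton] at hbound
  omega
lemma aux2I {V W : Type*} [Fintype V] [Fintype W] (G : SimpleGraph V) (H : SimpleGraph W)
    (f : V × W → ℕ) (hH : NoIsolated H) (hWne : Nonempty W)
    (huniv : ¬ ((∃ v, IsUniversalVertex G v) ∧ (∃ w, IsUniversalVertex H w)))
    (a : V) (b₁ b₂ : W) (hb : b₁ ≠ b₂)
    (hP : f (a, b₁) = 2) (hQ : f (a, b₂) = 2)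
    (h2mem : ∀ u, f u = 2 → u = (a, b₁) ∨ u = (a, b₂))
    (hpos : ∀ v : V × W, 0 < f v → ∃ u, (dirProd G H).Adj v u ∧ 0 < f u)
    (hzero : ∀ v, f v = 0 → ∃ u, (dirProd G H).Adj v u ∧ f u = 2)
    (hw : ∑ v, f v ≤ 7) : False := by
  classical
  have hz : ∀ p : V × W, f p = 0 →
      (G.Adj p.1 a ∧ H.Adj p.2 b₁) ∨ (G.Adj p.1 a ∧ H.Adj p.2 b₂) := by
    intro p hp
    obtain ⟨u, hadj, hu2⟩ := hzero p hp
    rcases h2mem u hu2 with rfl | rfl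
    · exact Or.inl hadj
    · exact Or.inr hadj
  have hfa : ∀ h : W, 0 < f (a, h) := by
    intro h
    rcases Nat.eq_zero_or_pos (f (a, h)) with h0 | h0
    · rcases hz _ h0 with ⟨h1, _⟩ | ⟨h1, _⟩ <;> exact absurd h1 (G.loopless.irrefl a)
    · exact h0
  by_cases hU : ∃ g', g' ≠ a ∧ ¬ G.Adj a g'
  · obtain ⟨g', hg'ne, hg'na⟩ := hU
    have hrow : ∀ h : W, 0 < f (g', h) := by
      intro h
      rcases Nat.eq_zero_or_pos (f (g', h)) with h0 | h0
      · rcases hz _ h0 with ⟨h1, _⟩ | ⟨h1, _⟩ <;> exact absurd h1.symm hg'na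
      · exact h0
    have hT2 : ∀ u ∈ ({(a, b₁), (a, b₂)} : Finset (V × W)), f u = 2 := by
      intro u hu
      simp only [Finset.mem_insert, Finset.mem_singleton] at hu
      rcases hu with rfl | rfl
      · exact hP
      · exact hQ
    have hTcard : ({(a, b₁), (a, b₂)} : Finset (V × W)).card = 2 := by
      rw [Finset.card_insert_of_notMem (by simp [hb]), Finset.card_singleton]
    have hposS1 : ∀ p ∈ (({a, g'} : Finset V) ×ˢ (univ : Finset W)), 0 < f p := by
      rintro ⟨x, y⟩ hp
      simp only [Finset.mem_product, Finset.mem_insert, Finset.mem_singleton] at hp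
      rcases hp.1 with rfl | rfl
      · exact hfa y
      · exact hrow y
    have hb1 := aux_sum_bound f (({a, g'} : Finset V) ×ˢ (univ : Finset W))
      {(a, b₁), (a, b₂)} (by intro p hp
                             simp only [Finset.mem_insert, Finset.mem_singleton] at hp
                             rcases hp with rfl | rfl <;> simp) hposS1 hT2
    rw [Finset.card_product, Finset.card_insert_of_notMem (by simpa using Ne.symm hg'ne),
      Finset.card_singleton, Finset.card_univ, hTcard] at hb1
    have hW2 : Fintype.card W ≤ 2 := by omega
    have hW2' : 2 ≤ Fintype.card W := by
      have : ({b₁, b₂} : Finset W).card = 2 := by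
        rw [Finset.card_insert_of_notMem (by simpa using hb), Finset.card_singleton]
      calc 2 = ({b₁, b₂} : Finset W).card := this.symm
        _ ≤ Fintype.card W := by
            rw [← Finset.card_univ]; exact Finset.card_le_card (Finset.subset_univ _)
    have hWeq : ({b₁, b₂} : Finset W) = univ := by
      apply Finset.eq_univ_of_card
      rw [Finset.card_insert_of_notMem (by simpa using hb), Finset.card_singleton]
      omega
    have hWall : ∀ h : W, h = b₁ ∨ h = b₂ := by
      intro h
      have : h ∈ ({b₁, b₂} : Finset W) := hWeq ▸ Finset.mem_univ h
      simpa using this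
    obtain ⟨z, hzadj, hzpos⟩ := hpos (a, b₁) (by omega)
    obtain ⟨z₁, z₂⟩ := z
    have hz₁a : z₁ ≠ a := fun h => G.loopless.irrefl a (h ▸ hzadj.1)
    have hz₁g' : z₁ ≠ g' := fun h => hg'na (h ▸ hzadj.1)
    have hz₂ : z₂ = b₂ := by
      rcases hWall z₂ with rfl | rfl
      · exact absurd hzadj.2 (H.loopless.irrefl z₂)
      · rfl
    obtain ⟨z', hz'adj, hz'pos⟩ := hpos (a, b₂) (by omega)
    obtain ⟨w₁, w₂⟩ := z'
    have hw₁a : w₁ ≠ a := fun h => G.loopless.irrefl a (h ▸ hz'adj.1)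
    have hw₁g' : w₁ ≠ g' := fun h => hg'na (h ▸ hz'adj.1)
    have hw₂ : w₂ = b₁ := by
      rcases hWall w₂ with rfl | rfl
      · rfl
      · exact absurd hz'adj.2 (H.loopless.irrefl w₂)
    have huq := aux_extra_unique f {(a, b₁), (a, b₂)} {(g', b₁), (g', b₂)}
      (by rw [Finset.disjoint_left]
          intro p hp hp2
          simp only [Finset.mem_insert, Finset.mem_singleton] at hp hp2
          rcases hp with rfl | rfl <;> rcases hp2 with h | h <;>
            exact Ne.symm hg'ne (congrArg Prod.fst h))
      hT2
      (by intro p hp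
          simp only [Finset.mem_insert, Finset.mem_singleton] at hp
          rcases hp with rfl | rfl <;> exact hrow _)
      hw
      (by rw [hTcard, Finset.card_insert_of_notMem (by simp [hb]), Finset.card_singleton])
    have heq := huq (z₁, z₂) (w₁, w₂)
      (by simp [Prod.ext_iff, hz₁a]) (by simp [Prod.ext_iff, hz₁g']) hzpos
      (by simp [Prod.ext_iff, hw₁a]) (by simp [Prod.ext_iff, hw₁g']) hz'pos
    have h22 : z₂ = w₂ := congrArg Prod.snd heq
    rw [hz₂, hw₂] at h22
    exact hb h22.symm
  · push_neg at hU
    have hUa : IsUniversalVertex G a := fun u hu => hU u hu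
    have hnoH : ¬ ∃ w, IsUniversalVertex H w := fun hB => huniv ⟨⟨a, hUa⟩, hB⟩
    have hW4 : 4 ≤ Fintype.card W := by
      by_contra hlt
      push_neg at hlt
      exact hnoH (aux_univ_of_card_le_three H (by omega) hWne hH)
    obtain ⟨x₁, hadj₁, hx₁⟩ := hpos (a, b₁) (by omega)
    have hu₁ : x₁.1 ≠ a := fun h => G.loopless.irrefl a (h ▸ hadj₁.1)
    obtain ⟨x₂, hadj₂, hx₂⟩ := hpos (a, x₁.2) (hfa _)
    have hu₂ : x₂.1 ≠ a := fun h => G.loopless.irrefl a (h ▸ hadj₂.1)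
    have hx₁₂ : x₁ ≠ x₂ := by
      intro h
      exact H.loopless.irrefl x₁.2 (by rw [h] at hadj₂ ⊢; exact hadj₂.2)
    set A : Finset (V × W) := ({a} : Finset V) ×ˢ univ with hA
    have hd : Disjoint A ({x₁, x₂} : Finset (V × W)) := by
      rw [Finset.disjoint_left]
      rintro ⟨x, y⟩ hp hp2
      rw [hA, Finset.mem_product, Finset.mem_singleton] at hp
      simp only [Finset.mem_insert, Finset.mem_singleton] at hp2
      rcases hp2 with h | h
      · exact hu₁ (by rw [← h]; exact hp.1)
      · exact hu₂ (by rw [← h]; exact hp.1)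
    have hcardS : (A ∪ {x₁, x₂}).card = Fintype.card W + 2 := by
      rw [Finset.card_union_of_disjoint hd, hA, Finset.card_product, Finset.card_singleton,
        Finset.card_univ, one_mul, Finset.card_insert_of_notMem (by simpa using hx₁₂),
        Finset.card_singleton]
    have hposS : ∀ p ∈ A ∪ {x₁, x₂}, 0 < f p := by
      rintro ⟨x, y⟩ hp
      rw [Finset.mem_union] at hp
      rcases hp with hp | hp
      · rw [hA, Finset.mem_product, Finset.mem_singleton] at hp
        have hxa : x = a := hp.1
        subst hxa
        exact hfa y
      · simp only [Finset.mem_insert, Finset.mem_singleton] at hp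
        rcases hp with h | h
        · rw [h]; exact hx₁
        · rw [h]; exact hx₂
    have hbound := aux_sum_bound f (A ∪ {x₁, x₂}) {(a, b₁), (a, b₂)}
      (by intro p hp
          simp only [Finset.mem_insert, Finset.mem_singleton] at hp
          rw [Finset.mem_union]
          left
          rcases hp with rfl | rfl <;> (rw [hA, Finset.mem_product]; simp))
      hposS
      (by intro u hu
          simp only [Finset.mem_insert, Finset.mem_singleton] at hu
          rcases hu with rfl | rfl
          · exact hP
          · exact hQ)
    rw [hcardS, Finset.card_insert_of_notMem (by simp [hb]), Finset.card_singleton] at hbound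
    omega
lemma aux2IIIb {V W : Type*} [Fintype V] [Fintype W] (G : SimpleGraph V) (H : SimpleGraph W)
    (f : V × W → ℕ) (a₁ a₂ : V) (b₁ b₂ : W) (ha : a₁ ≠ a₂) (hb : b₁ ≠ b₂)
    (hnb : ¬ H.Adj b₁ b₂)
    (hP : f (a₁, b₁) = 2) (hQ : f (a₂, b₂) = 2)
    (h2mem : ∀ u, f u = 2 → u = (a₁, b₁) ∨ u = (a₂, b₂))
    (hpos : ∀ v : V × W, 0 < f v → ∃ u, (dirProd G H).Adj v u ∧ 0 < f u)
    (hzero : ∀ v, f v = 0 → ∃ u, (dirProd G H).Adj v u ∧ f u = 2)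
    (hw : ∑ v, f v ≤ 7) : False := by
  classical
  have hz : ∀ p : V × W, f p = 0 →
      (G.Adj p.1 a₁ ∧ H.Adj p.2 b₁) ∨ (G.Adj p.1 a₂ ∧ H.Adj p.2 b₂) := by
    intro p hp
    obtain ⟨u, hadj, hu2⟩ := hzero p hp
    rcases h2mem u hu2 with rfl | rfl
    · exact Or.inl hadj
    · exact Or.inr hadj
  have hc₁ : 0 < f (a₁, b₂) := by
    rcases Nat.eq_zero_or_pos (f (a₁, b₂)) with h0 | h0
    · rcases hz _ h0 with ⟨h1, _⟩ | ⟨_, h2⟩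
      · exact absurd h1 (G.loopless.irrefl a₁)
      · exact absurd h2 (H.loopless.irrefl b₂)
    · exact h0
  have hc₂ : 0 < f (a₂, b₁) := by
    rcases Nat.eq_zero_or_pos (f (a₂, b₁)) with h0 | h0
    · rcases hz _ h0 with ⟨_, h2⟩ | ⟨h1, _⟩
      · exact absurd h2 (H.loopless.irrefl b₁)
      · exact absurd h1 (G.loopless.irrefl a₂)
    · exact h0
  have huq := aux_extra_unique f {(a₁, b₁), (a₂, b₂)} {(a₁, b₂), (a₂, b₁)}
    (by rw [Finset.disjoint_left]
        intro p hp hp2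
        simp only [Finset.mem_insert, Finset.mem_singleton] at hp hp2
        rcases hp with rfl | rfl
        · rcases hp2 with h | h
          · exact hb (congrArg Prod.snd h)
          · exact ha (congrArg Prod.fst h)
        · rcases hp2 with h | h
          · exact ha (congrArg Prod.fst h).symm
          · exact hb (congrArg Prod.snd h).symm)
    (by intro u hu
        simp only [Finset.mem_insert, Finset.mem_singleton] at hu
        rcases hu with rfl | rfl
        · exact hP
        · exact hQ)
    (by intro u hu
        simp only [Finset.mem_insert, Finset.mem_singleton] at hu
        rcases hu with rfl | rfl
        · exact hc₁
        · exact hc₂)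
    hw
    (by rw [Finset.card_insert_of_notMem
          (Finset.notMem_singleton.mpr (fun h => ha (congrArg Prod.fst h))),
          Finset.card_singleton,
          Finset.card_insert_of_notMem
          (Finset.notMem_singleton.mpr (fun h => ha (congrArg Prod.fst h))),
          Finset.card_singleton])
  obtain ⟨x, hxadj, hxpos⟩ := hpos (a₁, b₁) (by omega)
  have hx1 : G.Adj a₁ x.1 := hxadj.1
  have hx2 : H.Adj b₁ x.2 := hxadj.2
  have hx1a : x.1 ≠ a₁ := fun h => G.loopless.irrefl a₁ (h ▸ hx1)
  have hx2b₁ : x.2 ≠ b₁ := fun h => H.loopless.irrefl b₁ (h ▸ hx2)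
  have hx2b₂ : x.2 ≠ b₂ := fun h => hnb (h ▸ hx2)
  obtain ⟨x', hx'adj, hx'pos⟩ := hpos (a₂, b₂) (by omega)
  have hy1 : G.Adj a₂ x'.1 := hx'adj.1
  have hy2 : H.Adj b₂ x'.2 := hx'adj.2
  have hy1a : x'.1 ≠ a₂ := fun h => G.loopless.irrefl a₂ (h ▸ hy1)
  have hy2b₂ : x'.2 ≠ b₂ := fun h => H.loopless.irrefl b₂ (h ▸ hy2)
  have hy2b₁ : x'.2 ≠ b₁ := fun h => hnb ((h ▸ hy2)).symm
  have heq : x = x' := by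
    apply huq x x'
    · simp only [Finset.mem_insert, Finset.mem_singleton, not_or]
      exact ⟨fun h => hx2b₁ (congrArg Prod.snd h), fun h => hx2b₂ (congrArg Prod.snd h)⟩
    · simp only [Finset.mem_insert, Finset.mem_singleton, not_or]
      exact ⟨fun h => hx1a (congrArg Prod.fst h), fun h => hx2b₁ (congrArg Prod.snd h)⟩
    · exact hxpos
    · simp only [Finset.mem_insert, Finset.mem_singleton, not_or]
      exact ⟨fun h => hy2b₁ (congrArg Prod.snd h), fun h => hy2b₂ (congrArg Prod.snd h)⟩
    · simp only [Finset.mem_insert, Finset.mem_singleton, not_or]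
      exact ⟨fun h => hy2b₂ (congrArg Prod.snd h), fun h => hy1a (congrArg Prod.fst h)⟩
    · exact hx'pos
  have hx1a₂ : G.Adj a₂ x.1 := heq ▸ hy1
  have hx1na₂ : x.1 ≠ a₂ := fun h => G.loopless.irrefl a₂ (h ▸ hx1a₂)
  -- the cell (x.1, b₁) leads to contradiction
  rcases Nat.eq_zero_or_pos (f (x.1, b₁)) with h0 | h0
  · rcases hz _ h0 with ⟨_, h2⟩ | ⟨_, h2⟩
    · exact absurd h2 (H.loopless.irrefl b₁)
    · exact absurd h2 hnb
  · have hym : (x.1, b₁) ∉ ({(a₁, b₁), (a₂, b₂)} : Finset (V × W)) := by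
      simp only [Finset.mem_insert, Finset.mem_singleton, not_or]
      exact ⟨fun h => hx1a (congrArg Prod.fst h), fun h => hb (congrArg Prod.snd h)⟩
    have hym2 : (x.1, b₁) ∉ ({(a₁, b₂), (a₂, b₁)} : Finset (V × W)) := by
      simp only [Finset.mem_insert, Finset.mem_singleton, not_or]
      exact ⟨fun h => hx1a (congrArg Prod.fst h), fun h => hx1na₂ (congrArg Prod.fst h)⟩
    have := huq (x.1, b₁) x
      hym hym2 h0
      (by simp only [Finset.mem_insert, Finset.mem_singleton, not_or]
          exact ⟨fun h => hx2b₁ (congrArg Prod.snd h), fun h => hx2b₂ (congrArg Prod.snd h)⟩)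
      (by simp only [Finset.mem_insert, Finset.mem_singleton, not_or]
          exact ⟨fun h => hx1a (congrArg Prod.fst h), fun h => hx2b₁ (congrArg Prod.snd h)⟩)
      hxpos
    exact hx2b₁ (congrArg Prod.snd this).symm
lemma aux2III {V W : Type*} [Fintype V] [Fintype W] (G : SimpleGraph V) (H : SimpleGraph W)
    (f : V × W → ℕ)
    (huniv : ¬ ((∃ v, IsUniversalVertex G v) ∧ (∃ w, IsUniversalVertex H w)))
    (a₁ a₂ : V) (b₁ b₂ : W) (ha : a₁ ≠ a₂) (hb : b₁ ≠ b₂)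
    (hP : f (a₁, b₁) = 2) (hQ : f (a₂, b₂) = 2)
    (h2mem : ∀ u, f u = 2 → u = (a₁, b₁) ∨ u = (a₂, b₂))
    (hpos : ∀ v : V × W, 0 < f v → ∃ u, (dirProd G H).Adj v u ∧ 0 < f u)
    (hzero : ∀ v, f v = 0 → ∃ u, (dirProd G H).Adj v u ∧ f u = 2)
    (hw : ∑ v, f v ≤ 7) : False := by
  classical
  by_cases hadjb : H.Adj b₁ b₂
  · by_cases hadja : G.Adj a₁ a₂
    · -- both edges present: derive universal vertices on both sides
      have hz : ∀ p : V × W, f p = 0 →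
          (G.Adj p.1 a₁ ∧ H.Adj p.2 b₁) ∨ (G.Adj p.1 a₂ ∧ H.Adj p.2 b₂) := by
        intro p hp
        obtain ⟨u, hadj, hu2⟩ := hzero p hp
        rcases h2mem u hu2 with rfl | rfl
        · exact Or.inl hadj
        · exact Or.inr hadj
      have hc₁ : 0 < f (a₁, b₂) := by
        rcases Nat.eq_zero_or_pos (f (a₁, b₂)) with h0 | h0
        · rcases hz _ h0 with ⟨h1, _⟩ | ⟨_, h2⟩
          · exact absurd h1 (G.loopless.irrefl a₁)
          · exact absurd h2 (H.loopless.irrefl b₂)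
        · exact h0
      have hc₂ : 0 < f (a₂, b₁) := by
        rcases Nat.eq_zero_or_pos (f (a₂, b₁)) with h0 | h0
        · rcases hz _ h0 with ⟨_, h2⟩ | ⟨h1, _⟩
          · exact absurd h2 (H.loopless.irrefl b₁)
          · exact absurd h1 (G.loopless.irrefl a₂)
        · exact h0
      have huq := aux_extra_unique f {(a₁, b₁), (a₂, b₂)} {(a₁, b₂), (a₂, b₁)}
        (by rw [Finset.disjoint_left]
            intro p hp hp2
            simp only [Finset.mem_insert, Finset.mem_singleton] at hp hp2
            rcases hp with rfl | rfl
            · rcases hp2 with h | h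
              · exact hb (congrArg Prod.snd h)
              · exact ha (congrArg Prod.fst h)
            · rcases hp2 with h | h
              · exact ha (congrArg Prod.fst h).symm
              · exact hb (congrArg Prod.snd h).symm)
        (by intro u hu
            simp only [Finset.mem_insert, Finset.mem_singleton] at hu
            rcases hu with rfl | rfl
            · exact hP
            · exact hQ)
        (by intro u hu
            simp only [Finset.mem_insert, Finset.mem_singleton] at hu
            rcases hu with rfl | rfl
            · exact hc₁
            · exact hc₂)
        hw
        (by rw [Finset.card_insert_of_notMem
              (Finset.notMem_singleton.mpr (fun h => ha (congrArg Prod.fst h))),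
              Finset.card_singleton,
              Finset.card_insert_of_notMem
              (Finset.notMem_singleton.mpr (fun h => ha (congrArg Prod.fst h))),
              Finset.card_singleton])
      -- helper to state non-membership for cells with first coord outside {a₁,a₂}
      have hext : ∀ (g : V) (h : W), g ≠ a₁ → g ≠ a₂ → 0 < f (g, h) →
          ∀ (g' : V) (h' : W), g' ≠ a₁ → g' ≠ a₂ → 0 < f (g', h') → (g, h) = ((g', h') : V × W) := by
        intro g h hg1 hg2 hfp g' h' hg1' hg2' hfp'
        apply huq <;> try assumption
        · simp only [Finset.mem_insert, Finset.mem_singleton, not_or]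
          exact ⟨fun he => hg1 (congrArg Prod.fst he), fun he => hg2 (congrArg Prod.fst he)⟩
        · simp only [Finset.mem_insert, Finset.mem_singleton, not_or]
          exact ⟨fun he => hg1 (congrArg Prod.fst he), fun he => hg2 (congrArg Prod.fst he)⟩
        · simp only [Finset.mem_insert, Finset.mem_singleton, not_or]
          exact ⟨fun he => hg1' (congrArg Prod.fst he), fun he => hg2' (congrArg Prod.fst he)⟩
        · simp only [Finset.mem_insert, Finset.mem_singleton, not_or]
          exact ⟨fun he => hg1' (congrArg Prod.fst he), fun he => hg2' (congrArg Prod.fst he)⟩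
      have hexth : ∀ (g : V) (h : W), h ≠ b₁ → h ≠ b₂ → 0 < f (g, h) →
          ∀ (g' : V) (h' : W), h' ≠ b₁ → h' ≠ b₂ → 0 < f (g', h') → (g, h) = ((g', h') : V × W) := by
        intro g h hg1 hg2 hfp g' h' hg1' hg2' hfp'
        apply huq <;> try assumption
        · simp only [Finset.mem_insert, Finset.mem_singleton, not_or]
          exact ⟨fun he => hg1 (congrArg Prod.snd he), fun he => hg2 (congrArg Prod.snd he)⟩
        · simp only [Finset.mem_insert, Finset.mem_singleton, not_or]
          exact ⟨fun he => hg2 (congrArg Prod.snd he), fun he => hg1 (congrArg Prod.snd he)⟩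
        · simp only [Finset.mem_insert, Finset.mem_singleton, not_or]
          exact ⟨fun he => hg1' (congrArg Prod.snd he), fun he => hg2' (congrArg Prod.snd he)⟩
        · simp only [Finset.mem_insert, Finset.mem_singleton, not_or]
          exact ⟨fun he => hg2' (congrArg Prod.snd he), fun he => hg1' (congrArg Prod.snd he)⟩
      have hcols : (∀ g : V, g ≠ a₁ → g ≠ a₂ → f (g, b₁) = 0) ∨
          (∀ g : V, g ≠ a₁ → g ≠ a₂ → f (g, b₂) = 0) := by
        by_contra hcon
        push_neg at hcon
        obtain ⟨⟨g, hg1, hg2, hgne⟩, ⟨g', hg1', hg2', hgne'⟩⟩ := hcon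
        have := hext g b₁ hg1 hg2 (Nat.pos_of_ne_zero hgne) g' b₂ hg1' hg2'
          (Nat.pos_of_ne_zero hgne')
        exact hb (congrArg Prod.snd this)
      have hrows : (∀ h : W, h ≠ b₁ → h ≠ b₂ → f (a₁, h) = 0) ∨
          (∀ h : W, h ≠ b₁ → h ≠ b₂ → f (a₂, h) = 0) := by
        by_contra hcon
        push_neg at hcon
        obtain ⟨⟨h, hg1, hg2, hgne⟩, ⟨h', hg1', hg2', hgne'⟩⟩ := hcon
        have := hexth a₁ h hg1 hg2 (Nat.pos_of_ne_zero hgne) a₂ h' hg1' hg2'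
          (Nat.pos_of_ne_zero hgne')
        exact ha (congrArg Prod.fst this)
      have hGU : ∃ v, IsUniversalVertex G v := by
        rcases hcols with hcl | hcl
        · refine ⟨a₂, fun u hu => ?_⟩
          by_cases hu1 : u = a₁
          · subst hu1; exact hadja.symm
          · rcases hz _ (hcl u hu1 hu) with ⟨_, h2⟩ | ⟨h1, _⟩
            · exact absurd h2 (H.loopless.irrefl b₁)
            · exact h1.symm
        · refine ⟨a₁, fun u hu => ?_⟩
          by_cases hu2 : u = a₂
          · subst hu2; exact hadja
          · rcases hz _ (hcl u hu hu2) with ⟨h1, _⟩ | ⟨_, h2⟩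
            · exact h1.symm
            · exact absurd h2 (H.loopless.irrefl b₂)
      have hHU : ∃ w, IsUniversalVertex H w := by
        rcases hrows with hrl | hrl
        · refine ⟨b₂, fun u hu => ?_⟩
          by_cases hu1 : u = b₁
          · subst hu1; exact hadjb.symm
          · rcases hz _ (hrl u hu1 hu) with ⟨h1, _⟩ | ⟨_, h2⟩
            · exact absurd h1 (G.loopless.irrefl a₁)
            · exact h2.symm
        · refine ⟨b₁, fun u hu => ?_⟩
          by_cases hu2 : u = b₂
          · subst hu2; exact hadjb
          · rcases hz _ (hrl u hu hu2) with ⟨_, h2⟩ | ⟨h1, _⟩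
            · exact h2.symm
            · exact absurd h1 (G.loopless.irrefl a₂)
      exact huniv ⟨hGU, hHU⟩
    · -- ¬ G.Adj a₁ a₂ : apply the IIIb lemma with roles of G and H swapped
      apply aux2IIIb H G (fun p : W × V => f (p.2, p.1)) b₁ b₂ a₁ a₂ hb ha hadja
        hP hQ
      · intro u hu
        rcases h2mem (u.2, u.1) hu with h | h
        · left
          have h1 : u.2 = a₁ := congrArg Prod.fst h
          have h2 : u.1 = b₁ := congrArg Prod.snd h
          exact Prod.ext h2 h1
        · right
          have h1 : u.2 = a₂ := congrArg Prod.fst h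
          have h2 : u.1 = b₂ := congrArg Prod.snd h
          exact Prod.ext h2 h1
      · intro v hv
        obtain ⟨u, hadj, hup⟩ := hpos (v.2, v.1) hv
        exact ⟨(u.2, u.1), ⟨hadj.2, hadj.1⟩, hup⟩
      · intro v hv
        obtain ⟨u, hadj, hu2⟩ := hzero (v.2, v.1) hv
        exact ⟨(u.2, u.1), ⟨hadj.2, hadj.1⟩, hu2⟩
      · rw [aux_swap_sum]; exact hw
  · exact aux2IIIb G H f a₁ a₂ b₁ b₂ ha hb hadjb hP hQ h2mem hpos hzero hw
lemma aux3uniq {α : Type*} [Fintype α] [DecidableEq α] (f : α → ℕ) (P₁ P₂ P₃ : α)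
    (h12 : P₁ ≠ P₂) (h13 : P₁ ≠ P₃) (h23 : P₂ ≠ P₃)
    (h1 : f P₁ = 2) (h2 : f P₂ = 2) (h3 : f P₃ = 2) (hw : ∑ a, f a ≤ 7) :
    ∀ z z', 0 < f z → f z ≠ 2 → 0 < f z' → f z' ≠ 2 → z = z' := by
  intro z z' hz hz2 hz' hz'2
  have hB : ∀ a ∈ ({P₁, P₂, P₃} : Finset α), f a = 2 := by
    intro a ha
    simp only [Finset.mem_insert, Finset.mem_singleton] at ha
    rcases ha with rfl | rfl | rfl <;> assumption
  have hcard : ({P₁, P₂, P₃} : Finset α).card = 3 := by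
    rw [Finset.card_insert_of_notMem (by simp [h12, h13]),
      Finset.card_insert_of_notMem (by simpa using h23), Finset.card_singleton]
  have hnm : ∀ y : α, f y ≠ 2 → y ∉ ({P₁, P₂, P₃} : Finset α) := by
    intro y hy hmem
    exact hy (hB y hmem)
  exact aux_extra_unique f {P₁, P₂, P₃} ∅ (Finset.disjoint_empty_right _) hB
    (by intro a ha; exact absurd ha (Finset.notMem_empty a)) hw
    (by rw [hcard]; omega) z z' (hnm z hz2) (Finset.notMem_empty z) hz
    (hnm z' hz'2) (Finset.notMem_empty z') hz'

lemma aux3A {V W : Type*} [Fintype V] [Fintype W] (G : SimpleGraph V) (H : SimpleGraph W)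
    (f : V × W → ℕ) (a : V) (b₁ b₂ b₃ : W)
    (hb12 : b₁ ≠ b₂) (hb13 : b₁ ≠ b₃) (hb23 : b₂ ≠ b₃)
    (hP₁ : f (a, b₁) = 2) (hP₂ : f (a, b₂) = 2) (hP₃ : f (a, b₃) = 2)
    (h2mem : ∀ u, f u = 2 → u = (a, b₁) ∨ u = (a, b₂) ∨ u = (a, b₃))
    (hpos : ∀ v : V × W, 0 < f v → ∃ u, (dirProd G H).Adj v u ∧ 0 < f u)
    (hzero : ∀ v, f v = 0 → ∃ u, (dirProd G H).Adj v u ∧ f u = 2)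
    (hw : ∑ v, f v ≤ 7) : False := by
  classical
  have huq := aux3uniq f (a, b₁) (a, b₂) (a, b₃)
    (fun h => hb12 (congrArg Prod.snd h)) (fun h => hb13 (congrArg Prod.snd h))
    (fun h => hb23 (congrArg Prod.snd h)) hP₁ hP₂ hP₃ hw
  have hfa : ∀ h : W, 0 < f (a, h) := by
    intro h
    rcases Nat.eq_zero_or_pos (f (a, h)) with h0 | h0
    · obtain ⟨u, hadj, hu2⟩ := hzero _ h0
      rcases h2mem u hu2 with rfl | rfl | rfl <;> exact absurd hadj.1 (G.loopless.irrefl a)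
    · exact h0
  obtain ⟨x, hxadj, hxpos⟩ := hpos (a, b₁) (by omega)
  have hx1 : x.1 ≠ a := fun h => G.loopless.irrefl a (h ▸ hxadj.1)
  have hx2 : f x ≠ 2 := by
    intro h2
    rcases h2mem x h2 with h | h | h <;> exact hx1 (congrArg Prod.fst h)
  obtain ⟨z, hzadj, hzpos⟩ := hpos (a, x.2) (hfa x.2)
  have hz1 : z.1 ≠ a := fun h => G.loopless.irrefl a (h ▸ hzadj.1)
  have hz2 : f z ≠ 2 := by
    intro h2
    rcases h2mem z h2 with h | h | h <;> exact hz1 (congrArg Prod.fst h)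
  have := huq z x hzpos hz2 hxpos hx2
  exact H.loopless.irrefl x.2 (this ▸ hzadj.2)

lemma aux3paircore {V W : Type*} [Fintype V] [Fintype W] (G : SimpleGraph V) (H : SimpleGraph W)
    (f : V × W → ℕ)
    (huniv : ¬ ((∃ v, IsUniversalVertex G v) ∧ (∃ w, IsUniversalVertex H w)))
    (a a₃ : V) (b₁ b₂ : W) (haa : a ≠ a₃) (hbb : b₁ ≠ b₂)
    (hP₁ : f (a, b₁) = 2) (hP₂ : f (a, b₂) = 2) (hP₃ : f (a₃, b₁) = 2)
    (h2mem : ∀ u, f u = 2 → u = (a, b₁) ∨ u = (a, b₂) ∨ u = (a₃, b₁))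
    (hpos : ∀ v : V × W, 0 < f v → ∃ u, (dirProd G H).Adj v u ∧ 0 < f u)
    (hzero : ∀ v, f v = 0 → ∃ u, (dirProd G H).Adj v u ∧ f u = 2)
    (hw : ∑ v, f v ≤ 7) : False := by
  classical
  have huq := aux3uniq f (a, b₁) (a, b₂) (a₃, b₁)
    (fun h => hbb (congrArg Prod.snd h)) (fun h => haa (congrArg Prod.fst h))
    (fun h => haa (congrArg Prod.fst h)) hP₁ hP₂ hP₃ hw
  have hzadj : ∀ p : V × W, f p = 0 →
      (G.Adj p.1 a ∧ H.Adj p.2 b₁) ∨ (G.Adj p.1 a ∧ H.Adj p.2 b₂) ∨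
      (G.Adj p.1 a₃ ∧ H.Adj p.2 b₁) := by
    intro p hp
    obtain ⟨u, hadj, hu2⟩ := hzero p hp
    rcases h2mem u hu2 with rfl | rfl | rfl
    · exact Or.inl hadj
    · exact Or.inr (Or.inl hadj)
    · exact Or.inr (Or.inr hadj)
  obtain ⟨x, hxadj, hxpos⟩ := hpos (a, b₁) (by omega)
  have hxa : x.1 ≠ a := fun h => G.loopless.irrefl a (h ▸ hxadj.1)
  have hxb₁ : x.2 ≠ b₁ := fun h => H.loopless.irrefl b₁ (h ▸ hxadj.2)
  have hx2 : f x ≠ 2 := by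
    intro h2
    rcases h2mem x h2 with h | h | h
    · exact hxa (congrArg Prod.fst h)
    · exact hxa (congrArg Prod.fst h)
    · exact hxb₁ (congrArg Prod.snd h)
  by_cases hua₃ : x.1 = a₃
  · -- x sits in fiber a₃
    obtain ⟨z, hz3adj, hz3pos⟩ := hpos (a₃, b₁) (by omega)
    have hz1 : z.1 ≠ a₃ := fun h => G.loopless.irrefl a₃ (h ▸ hz3adj.1)
    have hz2b : z.2 ≠ b₁ := fun h => H.loopless.irrefl b₁ (h ▸ hz3adj.2)
    have hzP₂ : z = (a, b₂) := by
      by_cases hz2 : f z = 2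
      · rcases h2mem z hz2 with h | h | h
        · exact absurd (congrArg Prod.snd h) hz2b
        · exact h
        · exact absurd (congrArg Prod.fst h) hz1
      · have heq := huq z x hz3pos hz2 hxpos hx2
        exfalso
        apply hz1
        rw [heq]
        exact hua₃
    have haa₃ : G.Adj a₃ a := by rw [hzP₂] at hz3adj; exact hz3adj.1
    have hb₁₂ : H.Adj b₁ b₂ := by rw [hzP₂] at hz3adj; exact hz3adj.2
    have hHU : IsUniversalVertex H b₁ := by
      intro u' hu'
      by_cases hu2 : u' = b₂
      · subst hu2; exact hb₁₂
      · have hcell : f (a, u') = 0 := by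
          rcases Nat.eq_zero_or_pos (f (a, u')) with h0 | h0
          · exact h0
          · exfalso
            by_cases hc2 : f (a, u') = 2
            · rcases h2mem _ hc2 with h | h | h
              · exact hu' (congrArg Prod.snd h)
              · exact hu2 (congrArg Prod.snd h)
              · exact haa (congrArg Prod.fst h)
            · have := huq (a, u') x h0 hc2 hxpos hx2
              exact haa (hua₃ ▸ congrArg Prod.fst this)
        rcases hzadj _ hcell with ⟨h1, _⟩ | ⟨h1, _⟩ | ⟨_, h2⟩
        · exact absurd h1 (G.loopless.irrefl a)
        · exact absurd h1 (G.loopless.irrefl a)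
        · exact h2.symm
    have hGU : IsUniversalVertex G a := by
      intro g hg
      by_cases hg3 : g = a₃
      · subst hg3; exact haa₃.symm
      · have hcell : f (g, b₁) = 0 := by
          rcases Nat.eq_zero_or_pos (f (g, b₁)) with h0 | h0
          · exact h0
          · exfalso
            by_cases hc2 : f (g, b₁) = 2
            · rcases h2mem _ hc2 with h | h | h
              · exact hg (congrArg Prod.fst h)
              · exact hbb (congrArg Prod.snd h)
              · exact hg3 (congrArg Prod.fst h)
            · have := huq (g, b₁) x h0 hc2 hxpos hx2
              exact hg3 (hua₃ ▸ congrArg Prod.fst this)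
        rcases hzadj _ hcell with ⟨_, h2⟩ | ⟨h1, _⟩ | ⟨_, h2⟩
        · exact absurd h2 (H.loopless.irrefl b₁)
        · exact h1.symm
        · exact absurd h2 (H.loopless.irrefl b₁)
    exact huniv ⟨⟨a, hGU⟩, ⟨b₁, hHU⟩⟩
  · -- x.1 ∉ {a, a₃}
    have hb₁₂ : H.Adj b₁ b₂ := by
      have hcell : f (x.1, b₁) = 0 := by
        rcases Nat.eq_zero_or_pos (f (x.1, b₁)) with h0 | h0
        · exact h0
        · exfalso
          by_cases hc2 : f (x.1, b₁) = 2
          · rcases h2mem _ hc2 with h | h | h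
            · exact hxa (congrArg Prod.fst h)
            · exact hbb (congrArg Prod.snd h)
            · exact hua₃ (congrArg Prod.fst h)
          · have := huq (x.1, b₁) x h0 hc2 hxpos hx2
            exact hxb₁ (congrArg Prod.snd this).symm
      rcases hzadj _ hcell with ⟨_, h2⟩ | ⟨_, h2⟩ | ⟨_, h2⟩
      · exact absurd h2 (H.loopless.irrefl b₁)
      · exact h2
      · exact absurd h2 (H.loopless.irrefl b₁)
    have haa₃ : G.Adj a₃ a := by
      have hcell : f (a₃, b₂) = 0 := by
        rcases Nat.eq_zero_or_pos (f (a₃, b₂)) with h0 | h0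
        · exact h0
        · exfalso
          by_cases hc2 : f (a₃, b₂) = 2
          · rcases h2mem _ hc2 with h | h | h
            · exact haa (congrArg Prod.fst h).symm
            · exact haa (congrArg Prod.fst h).symm
            · exact hbb (congrArg Prod.snd h).symm
          · have := huq (a₃, b₂) x h0 hc2 hxpos hx2
            exact hua₃ (congrArg Prod.fst this).symm
      rcases hzadj _ hcell with ⟨h1, h2⟩ | ⟨_, h2⟩ | ⟨h1, _⟩
      · exact h1
      · exact absurd h2 (H.loopless.irrefl b₂)
      · exact absurd h1 (G.loopless.irrefl a₃)
    have hHU : IsUniversalVertex H b₁ := by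
      intro u' hu'
      by_cases hu2 : u' = b₂
      · subst hu2; exact hb₁₂
      · have hcell : f (a, u') = 0 := by
          rcases Nat.eq_zero_or_pos (f (a, u')) with h0 | h0
          · exact h0
          · exfalso
            by_cases hc2 : f (a, u') = 2
            · rcases h2mem _ hc2 with h | h | h
              · exact hu' (congrArg Prod.snd h)
              · exact hu2 (congrArg Prod.snd h)
              · exact haa (congrArg Prod.fst h)
            · have := huq (a, u') x h0 hc2 hxpos hx2
              exact hxa (congrArg Prod.fst this).symm
        rcases hzadj _ hcell with ⟨h1, _⟩ | ⟨h1, _⟩ | ⟨_, h2⟩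
        · exact absurd h1 (G.loopless.irrefl a)
        · exact absurd h1 (G.loopless.irrefl a)
        · exact h2.symm
    have hGU : IsUniversalVertex G a := by
      intro g hg
      by_cases hg3 : g = a₃
      · subst hg3; exact haa₃.symm
      · by_cases hgx : g = x.1
        · subst hgx; exact hxadj.1
        · have hcell : f (g, b₁) = 0 := by
            rcases Nat.eq_zero_or_pos (f (g, b₁)) with h0 | h0
            · exact h0
            · exfalso
              by_cases hc2 : f (g, b₁) = 2
              · rcases h2mem _ hc2 with h | h | h
                · exact hg (congrArg Prod.fst h)
                · exact hbb (congrArg Prod.snd h)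
                · exact hg3 (congrArg Prod.fst h)
              · have := huq (g, b₁) x h0 hc2 hxpos hx2
                exact hgx (congrArg Prod.fst this)
          rcases hzadj _ hcell with ⟨_, h2⟩ | ⟨h1, _⟩ | ⟨_, h2⟩
          · exact absurd h2 (H.loopless.irrefl b₁)
          · exact h1.symm
          · exact absurd h2 (H.loopless.irrefl b₁)
    exact huniv ⟨⟨a, hGU⟩, ⟨b₁, hHU⟩⟩

lemma aux3pair {V W : Type*} [Fintype V] [Fintype W] (G : SimpleGraph V) (H : SimpleGraph W)
    (f : V × W → ℕ)
    (huniv : ¬ ((∃ v, IsUniversalVertex G v) ∧ (∃ w, IsUniversalVertex H w)))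
    (a a₃ : V) (b₁ b₂ b₃ : W) (haa : a ≠ a₃) (hb12 : b₁ ≠ b₂)
    (hP₁ : f (a, b₁) = 2) (hP₂ : f (a, b₂) = 2) (hP₃ : f (a₃, b₃) = 2)
    (h2mem : ∀ u, f u = 2 → u = (a, b₁) ∨ u = (a, b₂) ∨ u = (a₃, b₃))
    (hpos : ∀ v : V × W, 0 < f v → ∃ u, (dirProd G H).Adj v u ∧ 0 < f u)
    (hzero : ∀ v, f v = 0 → ∃ u, (dirProd G H).Adj v u ∧ f u = 2)
    (hw : ∑ v, f v ≤ 7) : False := by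
  classical
  rcases Nat.eq_zero_or_pos (f (a, b₃)) with h0 | h0
  · obtain ⟨u, hadj, hu2⟩ := hzero _ h0
    rcases h2mem u hu2 with rfl | rfl | rfl
    · exact absurd hadj.1 (G.loopless.irrefl a)
    · exact absurd hadj.1 (G.loopless.irrefl a)
    · exact absurd hadj.2 (H.loopless.irrefl b₃)
  · by_cases h2 : f (a, b₃) = 2
    · rcases h2mem _ h2 with h | h | h
      · have hb31 : b₃ = b₁ := congrArg Prod.snd h
        subst hb31
        exact aux3paircore G H f huniv a a₃ b₃ b₂ haa hb12 hP₁ hP₂ hP₃ h2mem hpos hzero hw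
      · have hb32 : b₃ = b₂ := congrArg Prod.snd h
        subst hb32
        exact aux3paircore G H f huniv a a₃ b₃ b₁ haa (Ne.symm hb12) hP₂ hP₁ hP₃
          (fun u hu => by rcases h2mem u hu with h' | h' | h' <;> tauto) hpos hzero hw
      · exact haa (congrArg Prod.fst h)
    · have hb31 : b₃ ≠ b₁ := fun h => h2 (by rw [h]; exact hP₁)
      have hb32 : b₃ ≠ b₂ := fun h => h2 (by rw [h]; exact hP₂)
      have huq := aux3uniq f (a, b₁) (a, b₂) (a₃, b₃)
        (fun h => hb12 (congrArg Prod.snd h)) (fun h => haa (congrArg Prod.fst h))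
        (fun h => haa (congrArg Prod.fst h)) hP₁ hP₂ hP₃ hw
      obtain ⟨z, hz3adj, hz3pos⟩ := hpos (a, b₃) h0
      have hz1 : z.1 ≠ a := fun h => G.loopless.irrefl a (h ▸ hz3adj.1)
      have hz2b : z.2 ≠ b₃ := fun h => H.loopless.irrefl b₃ (h ▸ hz3adj.2)
      by_cases hz2 : f z = 2
      · rcases h2mem z hz2 with h | h | h
        · exact hz1 (congrArg Prod.fst h)
        · exact hz1 (congrArg Prod.fst h)
        · exact hz2b (congrArg Prod.snd h)
      · have := huq z (a, b₃) hz3pos hz2 h0 h2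
        exact hz1 (congrArg Prod.fst this)
lemma aux3TC {V W : Type*} [Fintype V] [Fintype W] (G : SimpleGraph V) (H : SimpleGraph W)
    (f : V × W → ℕ) (a₁ a₂ a₃ : V) (b₁ b₂ b₃ : W)
    (ha12 : a₁ ≠ a₂) (ha13 : a₁ ≠ a₃) (ha23 : a₂ ≠ a₃)
    (hb12 : b₁ ≠ b₂) (hb13 : b₁ ≠ b₃) (hb23 : b₂ ≠ b₃)
    (hP₁ : f (a₁, b₁) = 2) (hP₂ : f (a₂, b₂) = 2) (hP₃ : f (a₃, b₃) = 2)
    (h2mem : ∀ u, f u = 2 → u = (a₁, b₁) ∨ u = (a₂, b₂) ∨ u = (a₃, b₃))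
    (hpos : ∀ v : V × W, 0 < f v → ∃ u, (dirProd G H).Adj v u ∧ 0 < f u)
    (hzero : ∀ v, f v = 0 → ∃ u, (dirProd G H).Adj v u ∧ f u = 2)
    (hw : ∑ v, f v ≤ 7) : TriangleCentered G := by
  classical
  have huq := aux3uniq f (a₁, b₁) (a₂, b₂) (a₃, b₃)
    (fun h => ha12 (congrArg Prod.fst h)) (fun h => ha13 (congrArg Prod.fst h))
    (fun h => ha23 (congrArg Prod.fst h)) hP₁ hP₂ hP₃ hw
  have core : ∀ (x₁ x₂ x₃ : V) (y₁ y₂ y₃ : W),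
      (∀ u, f u = 2 → u = (x₁, y₁) ∨ u = (x₂, y₂) ∨ u = (x₃, y₃)) →
      x₁ ≠ x₂ → x₁ ≠ x₃ → y₁ ≠ y₂ →
      G.Adj x₁ x₃ ∧ H.Adj y₂ y₃ := by
    intro x₁ x₂ x₃ y₁ y₂ y₃ hmem hx12 hx13 hy12
    have hc2 : f (x₁, y₂) ≠ 2 := by
      intro h2
      rcases hmem _ h2 with h | h | h
      · exact hy12 (congrArg Prod.snd h).symm
      · exact hx12 (congrArg Prod.fst h)
      · exact hx13 (congrArg Prod.fst h)
    rcases Nat.eq_zero_or_pos (f (x₁, y₂)) with h0 | h0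
    · obtain ⟨u, hadj, hu2⟩ := hzero _ h0
      rcases hmem u hu2 with rfl | rfl | rfl
      · exact absurd hadj.1 (G.loopless.irrefl x₁)
      · exact absurd hadj.2 (H.loopless.irrefl y₂)
      · exact hadj
    · obtain ⟨z, hzadj, hzpos⟩ := hpos _ h0
      by_cases hz2 : f z = 2
      · rcases hmem z hz2 with rfl | rfl | rfl
        · exact absurd hzadj.1 (G.loopless.irrefl x₁)
        · exact absurd hzadj.2 (H.loopless.irrefl y₂)
        · exact hzadj
      · have heq := huq z (x₁, y₂) hzpos hz2 h0 hc2
        rw [heq] at hzadj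
        exact absurd hzadj.1 (G.loopless.irrefl x₁)
  have r1 := core a₁ a₂ a₃ b₁ b₂ b₃ h2mem ha12 ha13 hb12
  have r2 := core a₂ a₁ a₃ b₂ b₁ b₃
    (fun u hu => by rcases h2mem u hu with h | h | h <;> tauto) (Ne.symm ha12) ha23
    (Ne.symm hb12)
  have r3 := core a₁ a₃ a₂ b₁ b₃ b₂
    (fun u hu => by rcases h2mem u hu with h | h | h <;> tauto) ha13 ha12 hb13
  have e13 : G.Adj a₁ a₃ := r1.1
  have e23 : G.Adj a₂ a₃ := r2.1
  have e12 : G.Adj a₁ a₂ := r3.1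
  have cellc : ∀ (x₁ x₂ x₃ : V) (y₁ y₂ y₃ : W),
      (∀ u, f u = 2 → u = (x₁, y₁) ∨ u = (x₂, y₂) ∨ u = (x₃, y₃)) →
      ∀ g : V, g ≠ x₁ → g ≠ x₂ → g ≠ x₃ → G.Adj g x₂ ∨ G.Adj g x₃ := by
    intro x₁ x₂ x₃ y₁ y₂ y₃ hmem g hg1 hg2 hg3
    have hc2 : f (g, y₁) ≠ 2 := by
      intro h2
      rcases hmem _ h2 with h | h | h
      · exact hg1 (congrArg Prod.fst h)
      · exact hg2 (congrArg Prod.fst h)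
      · exact hg3 (congrArg Prod.fst h)
    rcases Nat.eq_zero_or_pos (f (g, y₁)) with h0 | h0
    · obtain ⟨u, hadj, hu2⟩ := hzero _ h0
      rcases hmem u hu2 with rfl | rfl | rfl
      · exact absurd hadj.2 (H.loopless.irrefl y₁)
      · exact Or.inl hadj.1
      · exact Or.inr hadj.1
    · obtain ⟨z, hzadj, hzpos⟩ := hpos _ h0
      by_cases hz2 : f z = 2
      · rcases hmem z hz2 with rfl | rfl | rfl
        · exact absurd hzadj.2 (H.loopless.irrefl y₁)
        · exact Or.inl hzadj.1
        · exact Or.inr hzadj.1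
      · have heq := huq z (g, y₁) hzpos hz2 h0 hc2
        rw [heq] at hzadj
        exact absurd hzadj.1 (G.loopless.irrefl g)
  refine ⟨a₁, a₂, a₃, e12, e23, e13, fun v => ?_⟩
  by_cases hv1 : v = a₁
  · subst hv1; exact Or.inr (Or.inl ⟨e12, e13⟩)
  by_cases hv2 : v = a₂
  · subst hv2; exact Or.inr (Or.inr ⟨e12.symm, e23⟩)
  by_cases hv3 : v = a₃
  · subst hv3; exact Or.inl ⟨e13.symm, e23.symm⟩
  have D1 := cellc a₁ a₂ a₃ b₁ b₂ b₃ h2mem v hv1 hv2 hv3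
  have D2 := cellc a₂ a₁ a₃ b₂ b₁ b₃
    (fun u hu => by rcases h2mem u hu with h | h | h <;> tauto) v hv2 hv1 hv3
  have D3 := cellc a₃ a₁ a₂ b₃ b₁ b₂
    (fun u hu => by rcases h2mem u hu with h | h | h <;> tauto) v hv3 hv1 hv2
  tauto
lemma noSmall {V W : Type*} [Fintype V] [Fintype W] (G : SimpleGraph V) (H : SimpleGraph W)
    (hG : NoIsolated G) (hH : NoIsolated H)
    (huniv : ¬ ((∃ v, IsUniversalVertex G v) ∧ (∃ w, IsUniversalVertex H w)))
    (htc : ¬ (TriangleCentered G ∧ TriangleCentered H))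
    (hVnt : Nontrivial V) (hWnt : Nontrivial W)
    (f : V × W → ℕ) (hf : IsTRDF (dirProd G H) f) (hw7 : ∑ v, f v ≤ 7) : False := by
  classical
  obtain ⟨hf1, hf2, hf3⟩ := hf
  have hVne : Nonempty V := ⟨hVnt.exists_pair_ne.choose⟩
  have hWne : Nonempty W := ⟨hWnt.exists_pair_ne.choose⟩
  have huniv' : ¬ ((∃ w, IsUniversalVertex H w) ∧ (∃ v, IsUniversalVertex G v)) :=
    fun hh => huniv ⟨hh.2, hh.1⟩
  have hposSW : ∀ v : W × V, 0 < f (v.2, v.1) →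
      ∃ u : W × V, (dirProd H G).Adj v u ∧ 0 < f (u.2, u.1) := by
    intro v hv
    obtain ⟨u, hadj, hup⟩ := hf3 (v.2, v.1) hv
    exact ⟨(u.2, u.1), ⟨hadj.2, hadj.1⟩, hup⟩
  have hzeroSW : ∀ v : W × V, f (v.2, v.1) = 0 →
      ∃ u : W × V, (dirProd H G).Adj v u ∧ f (u.2, u.1) = 2 := by
    intro v hv
    obtain ⟨u, hadj, hu2⟩ := hf2 (v.2, v.1) hv
    exact ⟨(u.2, u.1), ⟨hadj.2, hadj.1⟩, hu2⟩
  have hwSW : ∑ v : W × V, f (v.2, v.1) ≤ 7 := by rw [aux_swap_sum]; exact hw7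
  set D2 : Finset (V × W) := univ.filter (fun p => f p = 2) with hD2def
  have hmemD2 : ∀ u, f u = 2 ↔ u ∈ D2 := by
    intro u; simp [hD2def]
  have hcb := aux_sum_bound f D2 D2 (Finset.Subset.refl D2)
    (by intro a ha; rw [hD2def] at ha; simp at ha; omega)
    (by intro a ha; rw [hD2def] at ha; simp at ha; exact ha)
  have hc3 : D2.card ≤ 3 := by omega
  have hcases : D2.card = 0 ∨ D2.card = 1 ∨ D2.card = 2 ∨ D2.card = 3 := by omega
  have hV2 : 2 ≤ Fintype.card V := Fintype.one_lt_card_iff_nontrivial.mpr hVnt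
  have hW2 : 2 ≤ Fintype.card W := Fintype.one_lt_card_iff_nontrivial.mpr hWnt
  rcases hcases with h0 | h1 | h2 | h3
  · -- no vertex labeled 2 : all labels positive
    have hD2e : D2 = ∅ := Finset.card_eq_zero.mp h0
    have hposall : ∀ p : V × W, 0 < f p := by
      intro p
      rcases Nat.eq_zero_or_pos (f p) with hp | hp
      · obtain ⟨u, _, hu2⟩ := hf2 p hp
        have : u ∈ D2 := (hmemD2 u).mp hu2
        rw [hD2e] at this
        exact absurd this (Finset.notMem_empty u)
      · exact hp
    have hb := aux_sum_bound f univ ∅ (Finset.empty_subset _)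
      (fun a _ => hposall a) (by intro a ha; exact absurd ha (Finset.notMem_empty a))
    rw [Finset.card_univ, Finset.card_empty, Fintype.card_prod] at hb
    by_cases hV3 : Fintype.card V ≤ 3
    · by_cases hW3 : Fintype.card W ≤ 3
      · exact huniv ⟨aux_univ_of_card_le_three G hV3 hVne hG,
          aux_univ_of_card_le_three H hW3 hWne hH⟩
      · push_neg at hW3
        have : 2 * 4 ≤ Fintype.card V * Fintype.card W := Nat.mul_le_mul hV2 hW3
        omega
    · push_neg at hV3
      have : 4 * 2 ≤ Fintype.card V * Fintype.card W := Nat.mul_le_mul hV3 hW2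
      omega
  · -- exactly one 2
    obtain ⟨P, hPd⟩ := Finset.card_eq_one.mp h1
    obtain ⟨g₁, h₁⟩ := P
    have hP2 : f (g₁, h₁) = 2 := by
      have : (g₁, h₁) ∈ D2 := by rw [hPd]; exact Finset.mem_singleton_self _
      exact ((hmemD2 _).mpr this).symm ▸ ((hmemD2 _).mpr this)
    have h2mem : ∀ u, f u = 2 → u = (g₁, h₁) := by
      intro u hu
      have : u ∈ D2 := (hmemD2 u).mp hu
      rw [hPd] at this
      exact Finset.mem_singleton.mp this
    by_cases hUg : IsUniversalVertex G g₁
    · exact aux1U G H f hH hVnt hWne (fun hB => huniv ⟨⟨g₁, hUg⟩, hB⟩)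
        g₁ h₁ hP2 h2mem hf3 hf2 hw7
    · by_cases hUh : IsUniversalVertex H h₁
      · exact aux1U H G (fun p : W × V => f (p.2, p.1)) hG hWnt hVne
          (fun hA => huniv ⟨hA, ⟨h₁, hUh⟩⟩) h₁ g₁ hP2
          (by intro u hu
              have := h2mem (u.2, u.1) hu
              exact Prod.ext (congrArg Prod.snd this) (congrArg Prod.fst this))
          hposSW hzeroSW hwSW
      · rw [IsUniversalVertex] at hUg hUh
        push_neg at hUg hUh
        obtain ⟨g', hg'ne, hg'na⟩ := hUg
        obtain ⟨h', hh'ne, hh'na⟩ := hUh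
        exact aux1N G H f hG hH g₁ h₁ hP2 g' hg'ne hg'na h' hh'ne hh'na h2mem hf2 hw7
  · -- exactly two 2s
    obtain ⟨P, Q, hPQ, hD⟩ := Finset.card_eq_two.mp h2
    obtain ⟨p₁, p₂⟩ := P
    obtain ⟨q₁, q₂⟩ := Q
    have hfP : f (p₁, p₂) = 2 := by
      have : (p₁, p₂) ∈ D2 := by rw [hD]; simp
      exact (hmemD2 _).mpr this
    have hfQ : f (q₁, q₂) = 2 := by
      have : (q₁, q₂) ∈ D2 := by rw [hD]; simp
      exact (hmemD2 _).mpr this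
    have h2mem : ∀ u, f u = 2 → u = (p₁, p₂) ∨ u = (q₁, q₂) := by
      intro u hu
      have : u ∈ D2 := (hmemD2 u).mp hu
      rw [hD] at this
      simpa using this
    by_cases hpq1 : p₁ = q₁
    · subst hpq1
      have hne2 : p₂ ≠ q₂ := fun hh => hPQ (by rw [hh])
      exact aux2I G H f hH hWne huniv p₁ p₂ q₂ hne2 hfP hfQ h2mem hf3 hf2 hw7
    · by_cases hpq2 : p₂ = q₂
      · subst hpq2
        exact aux2I H G (fun p : W × V => f (p.2, p.1)) hG hVne huniv' p₂ p₁ q₁ hpq1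
          hfP hfQ
          (by intro u hu
              rcases h2mem (u.2, u.1) hu with h | h
              · exact Or.inl (Prod.ext (congrArg Prod.snd h) (congrArg Prod.fst h))
              · exact Or.inr (Prod.ext (congrArg Prod.snd h) (congrArg Prod.fst h)))
          hposSW hzeroSW hwSW
      · exact aux2III G H f huniv p₁ q₁ p₂ q₂ hpq1 hpq2 hfP hfQ h2mem hf3 hf2 hw7
  · -- exactly three 2s
    obtain ⟨P, Q, R, hPQ, hPR, hQR, hD⟩ := Finset.card_eq_three.mp h3
    obtain ⟨p₁, p₂⟩ := P
    obtain ⟨q₁, q₂⟩ := Q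
    obtain ⟨r₁, r₂⟩ := R
    have hfP : f (p₁, p₂) = 2 := by
      have : (p₁, p₂) ∈ D2 := by rw [hD]; simp
      exact (hmemD2 _).mpr this
    have hfQ : f (q₁, q₂) = 2 := by
      have : (q₁, q₂) ∈ D2 := by rw [hD]; simp
      exact (hmemD2 _).mpr this
    have hfR : f (r₁, r₂) = 2 := by
      have : (r₁, r₂) ∈ D2 := by rw [hD]; simp
      exact (hmemD2 _).mpr this
    have h2mem : ∀ u, f u = 2 → u = (p₁, p₂) ∨ u = (q₁, q₂) ∨ u = (r₁, r₂) := by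
      intro u hu
      have : u ∈ D2 := (hmemD2 u).mp hu
      rw [hD] at this
      simpa using this
    by_cases h12 : p₁ = q₁
    · subst h12
      have hb12 : p₂ ≠ q₂ := fun hh => hPQ (by rw [hh])
      by_cases h13 : p₁ = r₁
      · subst h13
        have hb13 : p₂ ≠ r₂ := fun hh => hPR (by rw [hh])
        have hb23 : q₂ ≠ r₂ := fun hh => hQR (by rw [hh])
        exact aux3A G H f p₁ p₂ q₂ r₂ hb12 hb13 hb23 hfP hfQ hfR h2mem hf3 hf2 hw7
      · exact aux3pair G H f huniv p₁ r₁ p₂ q₂ r₂ h13 hb12 hfP hfQ hfR h2mem hf3 hf2 hw7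
    · by_cases h13 : p₁ = r₁
      · subst h13
        have hb13 : p₂ ≠ r₂ := fun hh => hPR (by rw [hh])
        exact aux3pair G H f huniv p₁ q₁ p₂ r₂ q₂ (fun hh => h12 hh) hb13 hfP hfR hfQ
          (fun u hu => by rcases h2mem u hu with h | h | h <;> tauto) hf3 hf2 hw7
      · by_cases h23 : q₁ = r₁
        · subst h23
          have hb23 : q₂ ≠ r₂ := fun hh => hQR (by rw [hh])
          exact aux3pair G H f huniv q₁ p₁ q₂ r₂ p₂ (Ne.symm h12) hb23 hfQ hfR hfP
            (fun u hu => by rcases h2mem u hu with h | h | h <;> tauto) hf3 hf2 hw7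
        · -- all first coordinates distinct
          by_cases k12 : p₂ = q₂
          · subst k12
            by_cases k13 : p₂ = r₂
            · subst k13
              exact aux3A H G (fun p : W × V => f (p.2, p.1)) p₂ p₁ q₁ r₁ h12 h13 h23
                hfP hfQ hfR
                (by intro u hu
                    rcases h2mem (u.2, u.1) hu with h | h | h
                    · exact Or.inl (Prod.ext (congrArg Prod.snd h) (congrArg Prod.fst h))
                    · exact Or.inr (Or.inl (Prod.ext (congrArg Prod.snd h) (congrArg Prod.fst h)))
                    · exact Or.inr (Or.inr (Prod.ext (congrArg Prod.snd h) (congrArg Prod.fst h))))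
                hposSW hzeroSW hwSW
            · exact aux3pair H G (fun p : W × V => f (p.2, p.1)) huniv' p₂ r₂ p₁ q₁ r₁
                k13 h12 hfP hfQ hfR
                (by intro u hu
                    rcases h2mem (u.2, u.1) hu with h | h | h
                    · exact Or.inl (Prod.ext (congrArg Prod.snd h) (congrArg Prod.fst h))
                    · exact Or.inr (Or.inl (Prod.ext (congrArg Prod.snd h) (congrArg Prod.fst h)))
                    · exact Or.inr (Or.inr (Prod.ext (congrArg Prod.snd h) (congrArg Prod.fst h))))
                hposSW hzeroSW hwSW
          · by_cases k13 : p₂ = r₂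
            · subst k13
              exact aux3pair H G (fun p : W × V => f (p.2, p.1)) huniv' p₂ q₂ p₁ r₁ q₁
                (fun hh => k12 hh) h13 hfP hfR hfQ
                (by intro u hu
                    rcases h2mem (u.2, u.1) hu with h | h | h
                    · exact Or.inl (Prod.ext (congrArg Prod.snd h) (congrArg Prod.fst h))
                    · exact Or.inr (Or.inr (Prod.ext (congrArg Prod.snd h) (congrArg Prod.fst h)))
                    · exact Or.inr (Or.inl (Prod.ext (congrArg Prod.snd h) (congrArg Prod.fst h))))
                hposSW hzeroSW hwSW
            · by_cases k23 : q₂ = r₂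
              · subst k23
                exact aux3pair H G (fun p : W × V => f (p.2, p.1)) huniv' q₂ p₂ q₁ r₁ p₁
                  (Ne.symm k12) h23 hfQ hfR hfP
                  (by intro u hu
                      rcases h2mem (u.2, u.1) hu with h | h | h
                      · exact Or.inr (Or.inr (Prod.ext (congrArg Prod.snd h) (congrArg Prod.fst h)))
                      · exact Or.inl (Prod.ext (congrArg Prod.snd h) (congrArg Prod.fst h))
                      · exact Or.inr (Or.inl (Prod.ext (congrArg Prod.snd h) (congrArg Prod.fst h))))
                  hposSW hzeroSW hwSW
              · have hTCG := aux3TC G H f p₁ q₁ r₁ p₂ q₂ r₂ h12 h13 h23 k12 k13 k23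
                  hfP hfQ hfR h2mem hf3 hf2 hw7
                have hTCH := aux3TC H G (fun p : W × V => f (p.2, p.1)) p₂ q₂ r₂ p₁ q₁ r₁
                  k12 k13 k23 h12 h13 h23 hfP hfQ hfR
                  (by intro u hu
                      rcases h2mem (u.2, u.1) hu with h | h | h
                      · exact Or.inl (Prod.ext (congrArg Prod.snd h) (congrArg Prod.fst h))
                      · exact Or.inr (Or.inl (Prod.ext (congrArg Prod.snd h) (congrArg Prod.fst h)))
                      · exact Or.inr (Or.inr (Prod.ext (congrArg Prod.snd h) (congrArg Prod.fst h))))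
                  hposSW hzeroSW hwSW
                exact htc ⟨hTCG, hTCH⟩
lemma aux_upper {V W : Type*} [Fintype V] [Fintype W] (G : SimpleGraph V) (H : SimpleGraph W)
    (htG : tdn G = 2) (htH : tdn H = 2) :
    ∃ f : V × W → ℕ, IsTRDF (dirProd G H) f ∧ ∑ v, f v = 8 := by
  classical
  obtain ⟨a, b, habne, hab, hdomG⟩ := aux_tdn_pair G htG
  obtain ⟨c, d, hcdne, hcd, hdomH⟩ := aux_tdn_pair H htH
  set S : Finset (V × W) := ({a, b} : Finset V) ×ˢ ({c, d} : Finset W) with hS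
  have hScard : S.card = 4 := by
    rw [hS, Finset.card_product, Finset.card_insert_of_notMem (by simpa using habne),
      Finset.card_singleton, Finset.card_insert_of_notMem (by simpa using hcdne),
      Finset.card_singleton]
  refine ⟨fun p => if p ∈ S then 2 else 0, ⟨?_, ?_, ?_⟩, ?_⟩
  · intro v
    dsimp only
    split <;> omega
  · intro v hv
    dsimp only at hv
    have hvS : v ∉ S := by
      intro hm
      rw [if_pos hm] at hv
      omega
    rcases hdomG v.1 with h1 | h1 <;> rcases hdomH v.2 with h2 | h2
    · exact ⟨(a, c), ⟨h1, h2⟩, by dsimp only; rw [if_pos (by rw [hS, Finset.mem_product]; simp)]⟩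
    · exact ⟨(a, d), ⟨h1, h2⟩, by dsimp only; rw [if_pos (by rw [hS, Finset.mem_product]; simp)]⟩
    · exact ⟨(b, c), ⟨h1, h2⟩, by dsimp only; rw [if_pos (by rw [hS, Finset.mem_product]; simp)]⟩
    · exact ⟨(b, d), ⟨h1, h2⟩, by dsimp only; rw [if_pos (by rw [hS, Finset.mem_product]; simp)]⟩
  · intro v hv
    dsimp only at hv
    have hvS : v ∈ S := by
      by_contra hm
      rw [if_neg hm] at hv
      omega
    obtain ⟨x, y⟩ := v
    rw [hS, Finset.mem_product] at hvS
    simp only [Finset.mem_insert, Finset.mem_singleton] at hvS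
    obtain ⟨hx, hy⟩ := hvS
    rcases hx with rfl | rfl <;> rcases hy with rfl | rfl
    · exact ⟨(b, d), ⟨hab, hcd⟩, by dsimp only; rw [if_pos (by rw [hS, Finset.mem_product]; simp)]; omega⟩
    · exact ⟨(b, c), ⟨hab, hcd.symm⟩,
        by dsimp only; rw [if_pos (by rw [hS, Finset.mem_product]; simp)]; omega⟩
    · exact ⟨(a, d), ⟨hab.symm, hcd⟩,
        by dsimp only; rw [if_pos (by rw [hS, Finset.mem_product]; simp)]; omega⟩
    · exact ⟨(a, c), ⟨hab.symm, hcd.symm⟩,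
        by dsimp only; rw [if_pos (by rw [hS, Finset.mem_product]; simp)]; omega⟩
  · dsimp only
    rw [Finset.sum_ite_mem, Finset.univ_inter, Finset.sum_const, hScard]
    rfl

theorem stmt_15 {V W : Type*} [Fintype V] [Fintype W]
    (G : SimpleGraph V) (H : SimpleGraph W)
    (hG : NoIsolated G) (hH : NoIsolated H)
    (huniv : ¬ ((∃ v, IsUniversalVertex G v) ∧ (∃ w, IsUniversalVertex H w)))
    (htG : tdn G = 2) (htH : tdn H = 2)
    (htc : ¬ (TriangleCentered G ∧ TriangleCentered H)) :
    trdn (dirProd G H) = 8 := by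
  classical
  obtain ⟨a, b, habne, _, _⟩ := aux_tdn_pair G htG
  obtain ⟨c, d, hcdne, _, _⟩ := aux_tdn_pair H htH
  have hVnt : Nontrivial V := ⟨a, b, habne⟩
  have hWnt : Nontrivial W := ⟨c, d, hcdne⟩
  obtain ⟨f₀, hf₀, hsum₀⟩ := aux_upper G H htG htH
  have hmem8 : 8 ∈ {w | ∃ f : V × W → ℕ, IsTRDF (dirProd G H) f ∧ ∑ v, f v = w} :=
    ⟨f₀, hf₀, hsum₀⟩
  have hub : trdn (dirProd G H) ≤ 8 := Nat.sInf_le hmem8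
  have hlb : 8 ≤ trdn (dirProd G H) := by
    apply le_csInf ⟨8, hmem8⟩
    rintro w ⟨f, hf, rfl⟩
    by_contra hlt
    push_neg at hlt
    exact noSmall G H hG hH huniv htc hVnt hWnt f hf (by omega)
  omega
end

section
/- If m and n are positive integers divisible by 4, then γ_tR(C_m × C_n) = mn/2, where C_m × C_n is the direct product of cycles. -/
open Finset

/- ### Auxiliary lemmas -/

lemma cycle_adj_iff {k : ℕ} {u v : Fin (k + 4)} :
    (SimpleGraph.cycleGraph (k + 4)).Adj u v ↔ v = u - 1 ∨ v = u + 1 := by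
  have h := SimpleGraph.cycleGraph_neighborSet (n := k + 2) (v := u)
  have : v ∈ (SimpleGraph.cycleGraph (k + 4)).neighborSet u ↔ v ∈ ({u - 1, u + 1} : Set _) := by
    rw [h]
  simpa [SimpleGraph.mem_neighborSet] using this

lemma prod_adj {a b : ℕ} {p q : Fin (a + 4) × Fin (b + 4)} :
    (dirProd (SimpleGraph.cycleGraph (a + 4)) (SimpleGraph.cycleGraph (b + 4))).Adj p q ↔
      (q.1 = p.1 - 1 ∨ q.1 = p.1 + 1) ∧ (q.2 = p.2 - 1 ∨ q.2 = p.2 + 1) := by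
  show (SimpleGraph.cycleGraph (a + 4)).Adj p.1 q.1 ∧ (SimpleGraph.cycleGraph (b + 4)).Adj p.2 q.2 ↔ _
  rw [cycle_adj_iff, cycle_adj_iff]

lemma val_succ_mod {k : ℕ} (i : Fin (k + 4)) : (i + 1).val = (i.val + 1) % (k + 4) := by
  rw [Fin.val_add, Fin.val_one]

lemma val_pred_mod {k : ℕ} (i : Fin (k + 4)) : (i - 1).val = ((k + 4 - 1) + i.val) % (k + 4) := by
  rw [Fin.sub_def]
  simp [Fin.val_one]

lemma exists_good_nbr {a : ℕ} (h4 : 4 ∣ (a + 4)) (i : Fin (a + 4)) :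
    ∃ u : Fin (a + 4), (SimpleGraph.cycleGraph (a + 4)).Adj i u ∧ u.val % 4 ≤ 1 := by
  have hsucc : (i + 1).val % 4 = (i.val + 1) % 4 := by
    rw [val_succ_mod, Nat.mod_mod_of_dvd _ h4]
  have hpred : (i - 1).val % 4 = ((a + 4 - 1) + i.val) % 4 := by
    rw [val_pred_mod, Nat.mod_mod_of_dvd _ h4]
  by_cases hc : i.val % 4 = 0 ∨ i.val % 4 = 3
  · exact ⟨i + 1, cycle_adj_iff.2 (Or.inr rfl), by omega⟩
  · exact ⟨i - 1, cycle_adj_iff.2 (Or.inl rfl), by omega⟩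

lemma count_aux (q : ℕ) :
    ∑ k ∈ Finset.range (4 * q), (if k % 4 ≤ 1 then (1 : ℕ) else 0) = 2 * q := by
  induction q with
  | zero => simp
  | succ q ih =>
    have h : 4 * (q + 1) = 4 * q + 1 + 1 + 1 + 1 := by ring
    rw [h, Finset.sum_range_succ, Finset.sum_range_succ, Finset.sum_range_succ,
      Finset.sum_range_succ, ih]
    have h0 : 4 * q % 4 ≤ 1 := by omega
    have h1 : (4 * q + 1) % 4 ≤ 1 := by omega
    have h2 : ¬ (4 * q + 1 + 1) % 4 ≤ 1 := by omega
    have h3 : ¬ (4 * q + 1 + 1 + 1) % 4 ≤ 1 := by omega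
    rw [if_pos h0, if_pos h1, if_neg h2, if_neg h3]
    ring

lemma sum_ind {s : ℕ} (q : ℕ) (hq : s = 4 * q) :
    ∑ i : Fin s, (if i.val % 4 ≤ 1 then (1 : ℕ) else 0) = 2 * q := by
  rw [Fin.sum_univ_eq_sum_range (fun k => if k % 4 ≤ 1 then (1 : ℕ) else 0) s, hq, count_aux]

theorem stmt_19 (m n : ℕ) (hm : 0 < m) (hn : 0 < n) (hm4 : 4 ∣ m) (hn4 : 4 ∣ n) :
    trdn (dirProd (SimpleGraph.cycleGraph m) (SimpleGraph.cycleGraph n)) = m * n / 2 := by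
  classical
  obtain ⟨a, rfl⟩ : ∃ a, m = a + 4 := ⟨m - 4, by omega⟩
  obtain ⟨b, rfl⟩ : ∃ b, n = b + 4 := ⟨n - 4, by omega⟩
  obtain ⟨q, hq⟩ := id hm4
  obtain ⟨r, hr⟩ := id hn4
  set G := dirProd (SimpleGraph.cycleGraph (a + 4)) (SimpleGraph.cycleGraph (b + 4)) with hG
  set f : Fin (a + 4) × Fin (b + 4) → ℕ :=
    fun p => if p.1.val % 4 ≤ 1 ∧ p.2.val % 4 ≤ 1 then 2 else 0 with hf
  have hdom : ∀ v, ∃ u, G.Adj v u ∧ f u = 2 := by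
    rintro ⟨i, j⟩
    obtain ⟨ui, hui, hui2⟩ := exists_good_nbr hm4 i
    obtain ⟨uj, huj, huj2⟩ := exists_good_nbr hn4 j
    refine ⟨(ui, uj), ⟨hui, huj⟩, ?_⟩
    simp [hf, hui2, huj2]
  have hTRDF : IsTRDF G f := by
    refine ⟨fun v => ?_, fun v _ => hdom v, fun v _ => ?_⟩
    · simp only [hf]; split <;> omega
    · obtain ⟨u, hu, h2⟩ := hdom v
      exact ⟨u, hu, by omega⟩
  have hsum : ∑ v, f v = (a + 4) * (b + 4) / 2 := by
    have hfactor : ∀ p : Fin (a + 4) × Fin (b + 4),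
        f p = (2 * if p.1.val % 4 ≤ 1 then 1 else 0) * (if p.2.val % 4 ≤ 1 then 1 else 0) := by
      rintro ⟨i, j⟩
      by_cases h1 : i.val % 4 ≤ 1 <;> by_cases h2 : j.val % 4 ≤ 1 <;> simp [hf, h1, h2]
    rw [Finset.sum_congr rfl (fun p _ => hfactor p)]
    rw [Fintype.sum_prod_type]
    have : ∀ i : Fin (a + 4),
        ∑ j : Fin (b + 4), (2 * if i.val % 4 ≤ 1 then 1 else 0) * (if j.val % 4 ≤ 1 then 1 else 0)
        = (2 * if i.val % 4 ≤ 1 then 1 else 0) * (2 * r) := by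
      intro i
      rw [← Finset.mul_sum, sum_ind r hr]
    rw [Finset.sum_congr rfl (fun i _ => this i), ← Finset.sum_mul, ← Finset.mul_sum,
      sum_ind q hq]
    have : (a + 4) * (b + 4) = (4 * q) * (4 * r) := by rw [← hq, ← hr]
    rw [this]
    cases q <;> cases r <;> ring_nf <;> omega
  have hmem : (a + 4) * (b + 4) / 2 ∈
      {w | ∃ g : Fin (a + 4) × Fin (b + 4) → ℕ, IsTRDF G g ∧ ∑ v, g v = w} :=
    ⟨f, hTRDF, hsum⟩
  have hlb : ∀ w ∈ {w | ∃ g : Fin (a + 4) × Fin (b + 4) → ℕ, IsTRDF G g ∧ ∑ v, g v = w},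
      (a + 4) * (b + 4) / 2 ≤ w := by
    rintro w ⟨g, ⟨hg2, hg0, hgpos⟩, rfl⟩
    set P := (a + 4) * (b + 4) with hP
    suffices h : P ≤ 2 * ∑ v, g v by omega
    set V0 := Finset.univ.filter (fun v => g v = 0) with hV0
    set V1 := Finset.univ.filter (fun v => g v = 1) with hV1
    set V2 := Finset.univ.filter (fun v => g v = 2) with hV2
    have hcard : V0.card + V1.card + V2.card = P := by
      rw [hV0, hV1, hV2, Finset.card_filter, Finset.card_filter, Finset.card_filter,
        ← Finset.sum_add_distrib, ← Finset.sum_add_distrib]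
      have h1 : ∀ v : Fin (a + 4) × Fin (b + 4),
          ((if g v = 0 then 1 else 0) + (if g v = 1 then 1 else 0) + (if g v = 2 then 1 else 0) : ℕ)
          = 1 := by
        intro v
        have := hg2 v
        split_ifs <;> omega
      rw [Finset.sum_congr rfl (fun v _ => h1 v), Finset.sum_const, Finset.card_univ]
      simp [hP]
    have hsum2 : ∑ v, g v = V1.card + 2 * V2.card := by
      rw [hV1, hV2, Finset.card_filter, Finset.card_filter, Finset.mul_sum,
        ← Finset.sum_add_distrib]
      refine Finset.sum_congr rfl fun v _ => ?_
      have := hg2 v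
      split_ifs <;> omega
    have hV0le : V0.card ≤ 3 * V2.card := by
      have hsub : V0 ⊆ V2.biUnion
          (fun b2 => Finset.univ.filter (fun v => G.Adj b2 v ∧ g v = 0)) := by
        intro v hv
        rw [hV0, Finset.mem_filter] at hv
        obtain ⟨u, hadj, hu2⟩ := hg0 v hv.2
        refine Finset.mem_biUnion.mpr ⟨u, ?_, ?_⟩
        · rw [hV2, Finset.mem_filter]; exact ⟨Finset.mem_univ _, hu2⟩
        · rw [Finset.mem_filter]; exact ⟨Finset.mem_univ _, hadj.symm, hv.2⟩
      have hbu : V0.card ≤ ∑ b2 ∈ V2,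
          (Finset.univ.filter (fun v => G.Adj b2 v ∧ g v = 0)).card :=
        (Finset.card_le_card hsub).trans Finset.card_biUnion_le
      have hfib : ∀ b2 ∈ V2,
          (Finset.univ.filter (fun v => G.Adj b2 v ∧ g v = 0)).card ≤ 3 := by
        intro b2 hb2
        rw [hV2, Finset.mem_filter] at hb2
        obtain ⟨u0, hadj0, hpos0⟩ := hgpos b2 (by omega)
        set S4 : Finset (Fin (a + 4) × Fin (b + 4)) :=
          {(b2.1 - 1, b2.2 - 1), (b2.1 - 1, b2.2 + 1), (b2.1 + 1, b2.2 - 1),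
            (b2.1 + 1, b2.2 + 1)} with hS4
        have hu0mem : u0 ∈ S4 := by
          have := (prod_adj.1 hadj0)
          obtain ⟨h1 | h1, h2 | h2⟩ := this <;>
            simp [hS4, Finset.mem_insert, Prod.ext_iff, h1, h2]
        have hsub2 : (Finset.univ.filter (fun v => G.Adj b2 v ∧ g v = 0)) ⊆ S4.erase u0 := by
          intro v hv
          rw [Finset.mem_filter] at hv
          obtain ⟨-, hadj, hv0⟩ := hv
          refine Finset.mem_erase.mpr ⟨?_, ?_⟩
          · intro hvu; rw [hvu] at hv0; omega
          · have := (prod_adj.1 hadj)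
            obtain ⟨h1 | h1, h2 | h2⟩ := this <;>
              simp [hS4, Finset.mem_insert, Prod.ext_iff, h1, h2]
        have hS4card : S4.card ≤ 4 := by
          rw [hS4]
          refine (Finset.card_insert_le _ _).trans (Nat.add_le_add_right ?_ 1)
          refine (Finset.card_insert_le _ _).trans (Nat.add_le_add_right ?_ 1)
          refine (Finset.card_insert_le _ _).trans (Nat.add_le_add_right ?_ 1)
          simp
        have := Finset.card_erase_of_mem hu0mem
        have := Finset.card_le_card hsub2
        omega
      calc V0.card ≤ ∑ b2 ∈ V2,
            (Finset.univ.filter (fun v => G.Adj b2 v ∧ g v = 0)).card := hbu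
        _ ≤ ∑ _b2 ∈ V2, 3 := Finset.sum_le_sum hfib
        _ = 3 * V2.card := by rw [Finset.sum_const]; ring
    omega
  have : trdn G = sInf {w | ∃ g : Fin (a + 4) × Fin (b + 4) → ℕ, IsTRDF G g ∧ ∑ v, g v = w} :=
    rfl
  rw [this]
  exact le_antisymm (Nat.sInf_le hmem) (le_csInf ⟨_, hmem⟩ hlb)
end
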